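/- Let k ≥ 1 and let Λ be a row-finite, locally convex k-graph containing a return path with an entrance. Then there exists a boundary path x ∈ Λ^{≤∞} such that for every m ∈ ℕ^k with m ≤ d(x), there exist n ∈ ℕ^k with m ≤ n ≤ d(x) and p ∈ ℕ^k with n + p ≤ d(x) such that x(n, n+p) is a return path with an entrance. -/

import Mathlib

/-- A higher-rank graph (`k`-graph): a countable category `Λ` together with a degree
functor `d : Λ → ℕᵏ` satisfying the unique factorisation property.  Paths compose in the
convention `comp l m` is defined when `src l = rng m`, with range `rng l` and source
`src m`. -/
structure KGraph (k : ℕ) where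
  /-- The objects (vertices). -/
  Obj : Type
  /-- The morphisms (paths). -/
  Path : Type
  obj_countable : Countable Obj
  path_countable : Countable Path
  /-- The source (domain) of a path. -/
  src : Path → Obj
  /-- The range (codomain) of a path. -/
  rng : Path → Obj
  /-- The identity path at a vertex. -/
  ident : Obj → Path
  /-- Composition `l ∘ m`, defined when `src l = rng m`. -/
  comp : (l m : Path) → src l = rng m → Path
  src_ident : ∀ v, src (ident v) = v
  rng_ident : ∀ v, rng (ident v) = v
  src_comp : ∀ l m h, src (comp l m h) = src m
  rng_comp : ∀ l m h, rng (comp l m h) = rng l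
  comp_ident : ∀ l h, comp l (ident (src l)) h = l
  ident_comp : ∀ l h, comp (ident (rng l)) l h = l
  comp_assoc : ∀ l m n (h₁ : src l = rng m) (h₂ : src m = rng n)
    (h₃ : src (comp l m h₁) = rng n) (h₄ : src l = rng (comp m n h₂)),
    comp (comp l m h₁) n h₃ = comp l (comp m n h₂) h₄
  /-- The degree functor. -/
  d : Path → Fin k → ℕ
  d_ident : ∀ v, d (ident v) = 0
  d_comp : ∀ l m h, d (comp l m h) = d l + d m
  /-- Unique factorisation property: existence. -/
  factor : ∀ (l : Path) (m n : Fin k → ℕ), d l = m + n →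
    ∃ (μ ν : Path) (h : src μ = rng ν), d μ = m ∧ d ν = n ∧ comp μ ν h = l
  /-- Unique factorisation property: uniqueness. -/
  factor_unique : ∀ (μ ν μ' ν' : Path) (h : src μ = rng ν) (h' : src μ' = rng ν'),
    d μ = d μ' → comp μ ν h = comp μ' ν' h' → μ = μ' ∧ ν = ν'

namespace KGraph

variable {k : ℕ} (Λ : KGraph k)

/-- The initial segment `l(0, m)` of a path `l`, for `m ≤ d l`. -/
noncomputable def initSeg (l : Λ.Path) (m : Fin k → ℕ) (h : ∀ i, m i ≤ Λ.d l i) :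
    Λ.Path :=
  (Λ.factor l m (fun i => Λ.d l i - m i)
    (by funext i; have := h i; show Λ.d l i = m i + (Λ.d l i - m i); omega)).choose

/-- A return path: a path whose range equals its source. -/
def IsReturnPath (α : Λ.Path) : Prop := Λ.rng α = Λ.src α

/-- A path `α` has an entrance if there is `δ ∈ s(α)Λ` with `d δ ≤ d α` and
`α(0, d δ) ≠ δ`. -/
def HasEntrance (α : Λ.Path) : Prop :=
  ∃ (δ : Λ.Path) (hle : ∀ i, Λ.d δ i ≤ Λ.d α i),
    Λ.rng δ = Λ.src α ∧ Λ.initSeg α (Λ.d δ) hle ≠ δ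

/-- Row-finiteness: `vΛⁿ` is finite for every vertex `v` and degree `n`. -/
def RowFinite : Prop :=
  ∀ (v : Λ.Obj) (n : Fin k → ℕ), {l : Λ.Path | Λ.rng l = v ∧ Λ.d l = n}.Finite

/-- Local convexity. -/
def LocallyConvex : Prop :=
  ∀ (i j : Fin k), i ≠ j → ∀ (l m : Λ.Path), Λ.rng l = Λ.rng m →
    Λ.d l = Pi.single i 1 → Λ.d m = Pi.single j 1 →
    (∃ l', Λ.rng l' = Λ.src l ∧ Λ.d l' = Pi.single j 1) ∧
    (∃ m', Λ.rng m' = Λ.src m ∧ Λ.d m' = Pi.single i 1)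

end KGraph

namespace KGraph

variable {k : ℕ}

/-- A boundary path `x ∈ Λ^{≤∞}` of a row-finite locally convex `k`-graph: a
degree-preserving functor `x : Ω_{k,m} → Λ` (for some `m = deg ∈ (ℕ ∪ {∞})ᵏ`) such that
whenever `p ≤ m` and `p + eᵢ ≰ m`, the set `x(p)Λ^{eᵢ}` is empty. -/
structure BoundaryPath (Λ : KGraph k) where
  /-- The degree `d(x) ∈ (ℕ ∪ {∞})ᵏ`. -/
  deg : Fin k → ℕ∞
  /-- The image `x(p)` of the object `p ≤ deg`. -/
  vert : (p : Fin k → ℕ) → (∀ i, (p i : ℕ∞) ≤ deg i) → Λ.Obj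
  /-- The image `x(p, q)` of the morphism `(p, q)` with `p ≤ q ≤ deg`. -/
  map : (p q : Fin k → ℕ) → (∀ i, p i ≤ q i) → (∀ i, (q i : ℕ∞) ≤ deg i) → Λ.Path
  rng_map : ∀ p q hpq hq, Λ.rng (map p q hpq hq) =
    vert p (fun i => le_trans (by exact_mod_cast hpq i) (hq i))
  src_map : ∀ p q hpq hq, Λ.src (map p q hpq hq) = vert q hq
  d_map : ∀ p q hpq hq, Λ.d (map p q hpq hq) = fun i => q i - p i
  map_self : ∀ p hp, map p p (fun i => le_refl _) hp = Λ.ident (vert p hp)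
  map_comp : ∀ p q r hpq hqr hq hr
    (hcomp : Λ.src (map p q hpq hq) = Λ.rng (map q r hqr hr)),
    Λ.comp (map p q hpq hq) (map q r hqr hr) hcomp =
      map p r (fun i => le_trans (hpq i) (hqr i)) hr
  /-- The boundary condition: if `p ≤ deg` but `p + eᵢ ≰ deg`, then `x(p)Λ^{eᵢ} = ∅`. -/
  boundary : ∀ p (hp : ∀ i, (p i : ℕ∞) ≤ deg i) (i : Fin k),
    ¬ ((p i : ℕ∞) + 1 ≤ deg i) →
    ¬ ∃ l : Λ.Path, Λ.rng l = vert p hp ∧ Λ.d l = Pi.single i 1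

end KGraph

namespace KGraph

variable {k : ℕ} {Λ : KGraph k}

/-- The tail `l(m, d l)` of a path `l`, for `m ≤ d l`. -/
noncomputable def tailSeg (Λ : KGraph k) (l : Λ.Path) (m : Fin k → ℕ)
    (h : ∀ i, m i ≤ Λ.d l i) : Λ.Path :=
  (Λ.factor l m (fun i => Λ.d l i - m i)
    (by funext i; have := h i; show Λ.d l i = m i + (Λ.d l i - m i); omega)).choose_spec.choose

lemma split_spec (l : Λ.Path) (m : Fin k → ℕ) (h : ∀ i, m i ≤ Λ.d l i) :
    ∃ hc : Λ.src (Λ.initSeg l m h) = Λ.rng (Λ.tailSeg l m h),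
      Λ.d (Λ.initSeg l m h) = m ∧
      Λ.d (Λ.tailSeg l m h) = (fun i => Λ.d l i - m i) ∧
      Λ.comp (Λ.initSeg l m h) (Λ.tailSeg l m h) hc = l :=
  (Λ.factor l m (fun i => Λ.d l i - m i)
    (by funext i; have := h i; show Λ.d l i = m i + (Λ.d l i - m i); omega)).choose_spec.choose_spec

lemma d_initSeg (l : Λ.Path) (m : Fin k → ℕ) (h : ∀ i, m i ≤ Λ.d l i) :
    Λ.d (Λ.initSeg l m h) = m := (split_spec l m h).choose_spec.1

lemma d_tailSeg (l : Λ.Path) (m : Fin k → ℕ) (h : ∀ i, m i ≤ Λ.d l i) :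
    Λ.d (Λ.tailSeg l m h) = (fun i => Λ.d l i - m i) := (split_spec l m h).choose_spec.2.1

lemma comp_initSeg_tailSeg (l : Λ.Path) (m : Fin k → ℕ) (h : ∀ i, m i ≤ Λ.d l i) :
    ∃ hc, Λ.comp (Λ.initSeg l m h) (Λ.tailSeg l m h) hc = l :=
  ⟨(split_spec l m h).choose, (split_spec l m h).choose_spec.2.2⟩

lemma rng_initSeg (l : Λ.Path) (m : Fin k → ℕ) (h : ∀ i, m i ≤ Λ.d l i) :
    Λ.rng (Λ.initSeg l m h) = Λ.rng l := by
  obtain ⟨hc, hl⟩ := comp_initSeg_tailSeg l m h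
  conv_rhs => rw [← hl]
  rw [Λ.rng_comp]

lemma src_tailSeg (l : Λ.Path) (m : Fin k → ℕ) (h : ∀ i, m i ≤ Λ.d l i) :
    Λ.src (Λ.tailSeg l m h) = Λ.src l := by
  obtain ⟨hc, hl⟩ := comp_initSeg_tailSeg l m h
  conv_rhs => rw [← hl]
  rw [Λ.src_comp]

lemma rng_tailSeg (l : Λ.Path) (m : Fin k → ℕ) (h : ∀ i, m i ≤ Λ.d l i) :
    Λ.rng (Λ.tailSeg l m h) = Λ.src (Λ.initSeg l m h) := ((split_spec l m h).choose).symm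

/-- Uniqueness half of the factorisation, phrased for `initSeg`/`tailSeg`. -/
lemma split_unique {l μ ν : Λ.Path} {m : Fin k → ℕ} (hc : Λ.src μ = Λ.rng ν)
    (hl : Λ.comp μ ν hc = l) (hm : Λ.d μ = m) (h : ∀ i, m i ≤ Λ.d l i) :
    Λ.initSeg l m h = μ ∧ Λ.tailSeg l m h = ν := by
  obtain ⟨hc', hd, _, hl'⟩ := split_spec l m h
  exact Λ.factor_unique _ _ _ _ hc' hc (by rw [hd, hm]) (by rw [hl', hl])

lemma d_le_of_comp {l μ ν : Λ.Path} (hc : Λ.src μ = Λ.rng ν) (hl : Λ.comp μ ν hc = l) :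
    ∀ i, Λ.d μ i ≤ Λ.d l i := by
  intro i; rw [← hl, Λ.d_comp]; exact Nat.le_add_right _ _

lemma eq_ident_of_d_eq_zero {l : Λ.Path} (h : Λ.d l = 0) : l = Λ.ident (Λ.rng l) := by
  have h1 : Λ.comp (Λ.ident (Λ.rng l)) l (by rw [Λ.src_ident]) = l := Λ.ident_comp l _
  have h2 : Λ.comp l (Λ.ident (Λ.src l)) (by rw [Λ.rng_ident]) = l := Λ.comp_ident l _
  exact (Λ.factor_unique _ _ _ _ _ _ (by rw [Λ.d_ident, h]) (by rw [h1, h2])).1.symm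

lemma initSeg_full (l : Λ.Path) (h : ∀ i, Λ.d l i ≤ Λ.d l i) :
    Λ.initSeg l (Λ.d l) h = l := by
  have h2 : Λ.comp l (Λ.ident (Λ.src l)) (by rw [Λ.rng_ident]) = l := Λ.comp_ident l _
  exact (split_unique _ h2 rfl h).1

lemma initSeg_zero (l : Λ.Path) (h : ∀ i, (0 : Fin k → ℕ) i ≤ Λ.d l i) :
    Λ.initSeg l 0 h = Λ.ident (Λ.rng l) := by
  have h1 : Λ.comp (Λ.ident (Λ.rng l)) l (by rw [Λ.src_ident]) = l := Λ.ident_comp l _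
  exact (split_unique _ h1 (by rw [Λ.d_ident]) h).1

end KGraph
namespace KGraph

variable {k : ℕ} {Λ : KGraph k}

lemma comp_congr {a a' b b' : Λ.Path} (ha : a = a') (hb : b = b')
    (h : Λ.src a = Λ.rng b) (h' : Λ.src a' = Λ.rng b') :
    Λ.comp a b h = Λ.comp a' b' h' := by subst ha; subst hb; rfl

lemma initSeg_congr {a b : Λ.Path} {m : Fin k → ℕ} (hab : a = b)
    (h : ∀ i, m i ≤ Λ.d a i) (h' : ∀ i, m i ≤ Λ.d b i) :
    Λ.initSeg a m h = Λ.initSeg b m h' := by subst hab; rfl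

/-- The middle segment `l(p, q)` of a path `l`, for `p ≤ q ≤ d l`. -/
noncomputable def seg (Λ : KGraph k) (l : Λ.Path) (p q : Fin k → ℕ)
    (hpq : ∀ i, p i ≤ q i) (hq : ∀ i, q i ≤ Λ.d l i) : Λ.Path :=
  Λ.initSeg (Λ.tailSeg l p (fun i => le_trans (hpq i) (hq i))) (fun i => q i - p i)
    (by intro i; rw [d_tailSeg]
        show q i - p i ≤ Λ.d l i - p i
        have := hpq i; have := hq i; omega)

/-- The vertex `x(p)` of a path, as source of the initial segment. -/
noncomputable def vtx (Λ : KGraph k) (l : Λ.Path) (p : Fin k → ℕ)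
    (hp : ∀ i, p i ≤ Λ.d l i) : Λ.Obj :=
  Λ.src (Λ.initSeg l p hp)

lemma seg_congr {a b : Λ.Path} {p q : Fin k → ℕ} (hab : a = b)
    (hpq : ∀ i, p i ≤ q i) (hq : ∀ i, q i ≤ Λ.d a i) (hq' : ∀ i, q i ≤ Λ.d b i) :
    Λ.seg a p q hpq hq = Λ.seg b p q hpq hq' := by subst hab; rfl

lemma vtx_congr {a b : Λ.Path} {p : Fin k → ℕ} (hab : a = b)
    (hp : ∀ i, p i ≤ Λ.d a i) (hp' : ∀ i, p i ≤ Λ.d b i) :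
    Λ.vtx a p hp = Λ.vtx b p hp' := by subst hab; rfl

lemma d_seg (l : Λ.Path) (p q : Fin k → ℕ) (hpq : ∀ i, p i ≤ q i)
    (hq : ∀ i, q i ≤ Λ.d l i) :
    Λ.d (Λ.seg l p q hpq hq) = fun i => q i - p i := d_initSeg _ _ _

/-- Master lemma: any triple decomposition `l = A (B C)` with `d A = p`, `d B = q - p`
identifies `B` with `seg l p q`. -/
lemma seg_eq {l A B C : Λ.Path} {p q : Fin k → ℕ}
    (h2 : Λ.src B = Λ.rng C) (h12 : Λ.src A = Λ.rng (Λ.comp B C h2))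
    (hl : Λ.comp A (Λ.comp B C h2) h12 = l)
    (hp : Λ.d A = p) (hdB : Λ.d B = fun i => q i - p i) (hpq : ∀ i, p i ≤ q i)
    (hq : ∀ i, q i ≤ Λ.d l i) :
    Λ.seg l p q hpq hq = B := by
  obtain ⟨hA, hBC⟩ := split_unique h12 hl hp (fun i => le_trans (hpq i) (hq i))
  have hle : ∀ i, (fun i => q i - p i) i ≤ Λ.d (Λ.comp B C h2) i := by
    intro i
    rw [Λ.d_comp, Pi.add_apply, hdB]
    exact Nat.le_add_right _ _
  have hstep : Λ.seg l p q hpq hq = Λ.initSeg (Λ.comp B C h2) (fun i => q i - p i) hle :=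
    initSeg_congr hBC _ _
  rw [hstep]
  exact (split_unique h2 rfl hdB hle).1

/-- Canonical triple decomposition of `l` at `p ≤ q ≤ d l`. -/
lemma exists_triple (l : Λ.Path) (p q : Fin k → ℕ) (hpq : ∀ i, p i ≤ q i)
    (hq : ∀ i, q i ≤ Λ.d l i) :
    ∃ (A B C : Λ.Path) (h2 : Λ.src B = Λ.rng C) (h12 : Λ.src A = Λ.rng (Λ.comp B C h2)),
      Λ.comp A (Λ.comp B C h2) h12 = l ∧ Λ.d A = p ∧
      B = Λ.seg l p q hpq hq ∧ Λ.rng B = Λ.src A ∧ Λ.src C = Λ.src l ∧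
      Λ.d C = (fun i => Λ.d l i - q i) ∧ Λ.rng A = Λ.rng l := by
  have hp : ∀ i, p i ≤ Λ.d l i := fun i => le_trans (hpq i) (hq i)
  obtain ⟨hc, hl⟩ := comp_initSeg_tailSeg l p hp
  have hq' : ∀ i, q i - p i ≤ Λ.d (Λ.tailSeg l p hp) i := by
    intro i; rw [d_tailSeg]
    show q i - p i ≤ Λ.d l i - p i
    have := hq i; have := hpq i; omega
  obtain ⟨hc2, hl2⟩ := comp_initSeg_tailSeg (Λ.tailSeg l p hp) (fun i => q i - p i) hq'
  refine ⟨Λ.initSeg l p hp, Λ.initSeg (Λ.tailSeg l p hp) (fun i => q i - p i) hq',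
    Λ.tailSeg (Λ.tailSeg l p hp) (fun i => q i - p i) hq', hc2, by rw [hl2]; exact hc,
    (comp_congr rfl hl2 _ hc).trans hl, d_initSeg _ _ _, rfl, by rw [rng_initSeg, rng_tailSeg],
    by rw [src_tailSeg, src_tailSeg], ?_, rng_initSeg _ _ _⟩
  rw [d_tailSeg]
  funext i
  rw [d_tailSeg]
  show Λ.d l i - p i - (q i - p i) = Λ.d l i - q i
  have := hq i; have := hpq i; omega

lemma rng_seg (l : Λ.Path) (p q : Fin k → ℕ) (hpq : ∀ i, p i ≤ q i)
    (hq : ∀ i, q i ≤ Λ.d l i) :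
    Λ.rng (Λ.seg l p q hpq hq) = Λ.vtx l p (fun i => le_trans (hpq i) (hq i)) := by
  obtain ⟨A, B, C, h2, h12, hl, hdA, hB, hr, -, -, -⟩ := exists_triple l p q hpq hq
  rw [← hB, hr]
  unfold vtx
  congr 1
  exact ((split_unique h12 hl hdA _).1).symm

lemma src_seg (l : Λ.Path) (p q : Fin k → ℕ) (hpq : ∀ i, p i ≤ q i)
    (hq : ∀ i, q i ≤ Λ.d l i) :
    Λ.src (Λ.seg l p q hpq hq) = Λ.vtx l q hq := by
  obtain ⟨A, B, C, h2, h12, hl, hdA, hB, hr, -, -, -⟩ := exists_triple l p q hpq hq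
  have hAB : Λ.src A = Λ.rng B := hr.symm
  have h3 : Λ.src (Λ.comp A B hAB) = Λ.rng C := by rw [Λ.src_comp]; exact h2
  have hassoc := Λ.comp_assoc A B C hAB h2 h3 h12
  have hl' : Λ.comp (Λ.comp A B hAB) C h3 = l := by rw [hassoc, hl]
  have hdAB : Λ.d (Λ.comp A B hAB) = q := by
    rw [Λ.d_comp, hdA, hB]
    funext i
    rw [Pi.add_apply, d_seg]
    show p i + (q i - p i) = q i
    have := hpq i; omega
  have hu := (split_unique h3 hl' hdAB hq).1
  unfold vtx
  rw [hu, Λ.src_comp, hB]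

lemma seg_self (l : Λ.Path) (p : Fin k → ℕ) (hp : ∀ i, p i ≤ Λ.d l i) :
    Λ.seg l p p (fun i => le_refl _) hp = Λ.ident (Λ.vtx l p hp) := by
  have hd : Λ.d (Λ.seg l p p (fun i => le_refl _) hp) = 0 := by
    rw [d_seg]; funext i; simp
  rw [eq_ident_of_d_eq_zero hd, rng_seg]

lemma seg_full (l : Λ.Path) (hpq : ∀ i, (0 : Fin k → ℕ) i ≤ Λ.d l i)
    (hq : ∀ i, Λ.d l i ≤ Λ.d l i) :
    Λ.seg l 0 (Λ.d l) hpq hq = l := by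
  have h2 : Λ.src l = Λ.rng (Λ.ident (Λ.src l)) := by rw [Λ.rng_ident]
  have h12 : Λ.src (Λ.ident (Λ.rng l)) = Λ.rng (Λ.comp l (Λ.ident (Λ.src l)) h2) := by
    rw [Λ.src_ident, Λ.rng_comp]
  refine seg_eq h2 h12 ?_ (by rw [Λ.d_ident]) (by funext i; simp) hpq hq
  have e1 : Λ.comp l (Λ.ident (Λ.src l)) h2 = l := Λ.comp_ident l _
  have := Λ.ident_comp l (by rw [Λ.src_ident] : Λ.src (Λ.ident (Λ.rng l)) = Λ.rng l)
  calc Λ.comp (Λ.ident (Λ.rng l)) (Λ.comp l (Λ.ident (Λ.src l)) h2) h12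
      = Λ.comp (Λ.ident (Λ.rng l)) l (by rw [Λ.src_ident]) := comp_congr rfl e1 _ _
    _ = l := this

end KGraph
namespace KGraph

variable {k : ℕ} {Λ : KGraph k}

lemma vtx_zero (l : Λ.Path) (h : ∀ i, (0 : Fin k → ℕ) i ≤ Λ.d l i) :
    Λ.vtx l 0 h = Λ.rng l := by
  unfold vtx; rw [initSeg_zero, Λ.src_ident]

lemma vtx_full (l : Λ.Path) (h : ∀ i, Λ.d l i ≤ Λ.d l i) :
    Λ.vtx l (Λ.d l) h = Λ.src l := by
  unfold vtx; rw [initSeg_full]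

lemma initSeg_stable {l m : Λ.Path} (hc : Λ.src l = Λ.rng m) {p : Fin k → ℕ}
    (hp : ∀ i, p i ≤ Λ.d l i) (hp' : ∀ i, p i ≤ Λ.d (Λ.comp l m hc) i) :
    Λ.initSeg (Λ.comp l m hc) p hp' = Λ.initSeg l p hp := by
  obtain ⟨hc1, hl1⟩ := comp_initSeg_tailSeg l p hp
  have hCm : Λ.src (Λ.tailSeg l p hp) = Λ.rng m := by rw [src_tailSeg]; exact hc
  have h3 : Λ.src (Λ.comp (Λ.initSeg l p hp) (Λ.tailSeg l p hp) hc1) = Λ.rng m := by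
    rw [Λ.src_comp]; exact hCm
  have h4 : Λ.src (Λ.initSeg l p hp) = Λ.rng (Λ.comp (Λ.tailSeg l p hp) m hCm) := by
    rw [Λ.rng_comp]; exact hc1
  have key : Λ.comp (Λ.initSeg l p hp) (Λ.comp (Λ.tailSeg l p hp) m hCm) h4
      = Λ.comp l m hc := by
    rw [← Λ.comp_assoc _ _ _ hc1 hCm h3 h4]
    exact comp_congr hl1 rfl _ _
  exact (split_unique h4 key (d_initSeg _ _ _) hp').1

lemma vtx_stable {l m : Λ.Path} (hc : Λ.src l = Λ.rng m) {p : Fin k → ℕ}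
    (hp : ∀ i, p i ≤ Λ.d l i) (hp' : ∀ i, p i ≤ Λ.d (Λ.comp l m hc) i) :
    Λ.vtx (Λ.comp l m hc) p hp' = Λ.vtx l p hp := by
  unfold vtx; rw [initSeg_stable hc hp hp']

lemma seg_stable {l m : Λ.Path} (hc : Λ.src l = Λ.rng m) {p q : Fin k → ℕ}
    (hpq : ∀ i, p i ≤ q i) (hq : ∀ i, q i ≤ Λ.d l i)
    (hq' : ∀ i, q i ≤ Λ.d (Λ.comp l m hc) i) :
    Λ.seg (Λ.comp l m hc) p q hpq hq' = Λ.seg l p q hpq hq := by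
  obtain ⟨A, B, C, h2, h12, hl, hdA, hB, hrBA, hsC, hdC, -⟩ := exists_triple l p q hpq hq
  have hCm : Λ.src C = Λ.rng m := by rw [hsC]; exact hc
  have h2' : Λ.src B = Λ.rng (Λ.comp C m hCm) := by rw [Λ.rng_comp]; exact h2
  have h3 : Λ.src (Λ.comp B C h2) = Λ.rng m := by rw [Λ.src_comp]; exact hCm
  have hinner : Λ.comp (Λ.comp B C h2) m h3 = Λ.comp B (Λ.comp C m hCm) h2' :=
    Λ.comp_assoc B C m h2 hCm h3 h2'
  have h12' : Λ.src A = Λ.rng (Λ.comp B (Λ.comp C m hCm) h2') := by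
    rw [Λ.rng_comp]; rw [Λ.rng_comp] at h12; exact h12
  have h5 : Λ.src (Λ.comp A (Λ.comp B C h2) h12) = Λ.rng m := by rw [Λ.src_comp]; exact h3
  have key : Λ.comp A (Λ.comp B (Λ.comp C m hCm) h2') h12' = Λ.comp l m hc :=
    calc Λ.comp A (Λ.comp B (Λ.comp C m hCm) h2') h12'
        = Λ.comp A (Λ.comp (Λ.comp B C h2) m h3) (by rw [Λ.rng_comp, Λ.rng_comp]; exact hrBA.symm) := comp_congr rfl hinner.symm _ _
      _ = Λ.comp (Λ.comp A (Λ.comp B C h2) h12) m h5 :=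
          (Λ.comp_assoc A (Λ.comp B C h2) m h12 h3 h5 _).symm
      _ = Λ.comp l m hc := comp_congr hl rfl _ _
  rw [seg_eq h2' h12' key hdA (by rw [hB, d_seg]) hpq hq', hB]

lemma seg_comp (l : Λ.Path) (p q r : Fin k → ℕ) (hpq : ∀ i, p i ≤ q i)
    (hqr : ∀ i, q i ≤ r i) (hr : ∀ i, r i ≤ Λ.d l i) (hq : ∀ i, q i ≤ Λ.d l i)
    (hcomp : Λ.src (Λ.seg l p q hpq hq) = Λ.rng (Λ.seg l q r hqr hr)) :
    Λ.comp (Λ.seg l p q hpq hq) (Λ.seg l q r hqr hr) hcomp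
      = Λ.seg l p r (fun i => le_trans (hpq i) (hqr i)) hr := by
  obtain ⟨A, B, C, h2, h12, hl, hdA, hB, hrBA, hsC, hdC, -⟩ := exists_triple l p q hpq hq
  have hle2 : ∀ i, (fun i => r i - q i) i ≤ Λ.d C i := by
    intro i; rw [hdC]
    show r i - q i ≤ Λ.d l i - q i
    have := hr i; have := hqr i; omega
  obtain ⟨hc3, hl3⟩ := comp_initSeg_tailSeg C (fun i => r i - q i) hle2
  set B2 := Λ.initSeg C (fun i => r i - q i) hle2 with hB2def
  set C2 := Λ.tailSeg C (fun i => r i - q i) hle2 with hC2def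
  have hdB2 : Λ.d B2 = fun i => r i - q i := d_initSeg _ _ _
  have hdB : Λ.d B = fun i => q i - p i := by rw [hB, d_seg]
  -- l = (A·B)·(B2·C2)
  have hBC2 : Λ.src B = Λ.rng (Λ.comp B2 C2 hc3) := by
    rw [Λ.rng_comp, rng_initSeg]; exact h2
  have step0 : Λ.comp B (Λ.comp B2 C2 hc3) hBC2 = Λ.comp B C h2 := comp_congr rfl hl3 _ _
  have hA_B : Λ.src A = Λ.rng B := hrBA.symm
  have hAB_BC2 : Λ.src (Λ.comp A B hA_B) = Λ.rng (Λ.comp B2 C2 hc3) := by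
    rw [Λ.src_comp]; exact hBC2
  have h12'' : Λ.src A = Λ.rng (Λ.comp B (Λ.comp B2 C2 hc3) hBC2) := by
    rw [Λ.rng_comp]; rw [Λ.rng_comp] at h12; exact h12
  have key1 : Λ.comp (Λ.comp A B hA_B) (Λ.comp B2 C2 hc3) hAB_BC2 = l := by
    rw [Λ.comp_assoc A B (Λ.comp B2 C2 hc3) hA_B hBC2 hAB_BC2 h12'']
    rw [← hl]
    exact comp_congr rfl step0 _ _
  have hdAB : Λ.d (Λ.comp A B hA_B) = q := by
    rw [Λ.d_comp, hdA, hdB]; funext i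
    rw [Pi.add_apply]
    show p i + (q i - p i) = q i
    have := hpq i; omega
  have seg_qr : Λ.seg l q r hqr hr = B2 :=
    seg_eq hc3 hAB_BC2 key1 hdAB hdB2 hqr hr
  -- l = A·((B·B2)·C2)
  have hBB2 : Λ.src B = Λ.rng B2 := by rw [rng_initSeg]; exact h2
  have h5 : Λ.src (Λ.comp B B2 hBB2) = Λ.rng C2 := by rw [Λ.src_comp]; exact hc3
  have hinner2 : Λ.comp (Λ.comp B B2 hBB2) C2 h5 = Λ.comp B (Λ.comp B2 C2 hc3) hBC2 :=
    Λ.comp_assoc B B2 C2 hBB2 hc3 h5 hBC2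
  have h12''' : Λ.src A = Λ.rng (Λ.comp (Λ.comp B B2 hBB2) C2 h5) := by
    rw [Λ.rng_comp, Λ.rng_comp]; rw [Λ.rng_comp] at h12; exact h12
  have key2 : Λ.comp A (Λ.comp (Λ.comp B B2 hBB2) C2 h5) h12''' = l :=
    calc Λ.comp A (Λ.comp (Λ.comp B B2 hBB2) C2 h5) h12'''
        = Λ.comp A (Λ.comp B (Λ.comp B2 C2 hc3) hBC2) h12'' := comp_congr rfl hinner2 _ _
      _ = Λ.comp (Λ.comp A B hA_B) (Λ.comp B2 C2 hc3) hAB_BC2 :=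
          (Λ.comp_assoc A B (Λ.comp B2 C2 hc3) hA_B hBC2 hAB_BC2 h12'').symm
      _ = l := key1
  have hdBB2 : Λ.d (Λ.comp B B2 hBB2) = fun i => r i - p i := by
    rw [Λ.d_comp, hdB, hdB2]; funext i
    rw [Pi.add_apply]
    show q i - p i + (r i - q i) = r i - p i
    have := hpq i; have := hqr i; omega
  have seg_pr : Λ.seg l p r (fun i => le_trans (hpq i) (hqr i)) hr = Λ.comp B B2 hBB2 :=
    seg_eq h5 h12''' key2 hdA hdBB2 _ hr
  rw [seg_pr]
  exact comp_congr hB.symm seg_qr _ _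

end KGraph
namespace KGraph

variable {k : ℕ} {Λ : KGraph k}

/-- If `v = rng ξ` emits an edge of degree `eᵢ` and `d ξ i = 0`, then `src ξ` emits such
an edge too (by local convexity). -/
lemma emits_down (hlc : Λ.LocallyConvex) :
    ∀ (N : ℕ) (ξ : Λ.Path), (∑ j, Λ.d ξ j) = N → ∀ i, Λ.d ξ i = 0 →
    (∃ g, Λ.rng g = Λ.rng ξ ∧ Λ.d g = Pi.single i 1) →
    ∃ g, Λ.rng g = Λ.src ξ ∧ Λ.d g = Pi.single i 1 := by
  intro N
  induction N using Nat.strong_induction_on with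
  | _ N ih =>
    intro ξ hsum i hdi ⟨g, hg, hdg⟩
    rcases Nat.eq_zero_or_pos N with hN | hN
    · have hz : Λ.d ξ = 0 := by
        funext j
        have := Finset.sum_eq_zero_iff.mp (hsum.trans hN) j (Finset.mem_univ j)
        simpa using this
      have hξ := eq_ident_of_d_eq_zero hz
      have : Λ.src ξ = Λ.rng ξ := by rw [hξ, Λ.src_ident, Λ.rng_ident]
      exact ⟨g, by rw [this]; exact hg, hdg⟩
    · have hex : ∃ j, 0 < Λ.d ξ j := by
        by_contra hcon
        push_neg at hcon
        have : (∑ j, Λ.d ξ j) = 0 := Finset.sum_eq_zero (fun j _ => Nat.le_zero.mp (hcon j))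
        omega
      obtain ⟨j, hj⟩ := hex
      have hij : i ≠ j := fun h => by rw [h] at hdi; omega
      have hle : ∀ i', (Pi.single j 1 : Fin k → ℕ) i' ≤ Λ.d ξ i' := by
        intro i'
        rcases eq_or_ne i' j with h | h
        · subst h; simpa using Nat.succ_le_of_lt hj
        · rw [Pi.single_eq_of_ne h]; exact Nat.zero_le _
      obtain ⟨hc, hl⟩ := comp_initSeg_tailSeg ξ (Pi.single j 1) hle
      set η := Λ.initSeg ξ (Pi.single j 1) hle
      set ρ := Λ.tailSeg ξ (Pi.single j 1) hle
      have hrη : Λ.rng η = Λ.rng ξ := rng_initSeg _ _ _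
      have hdη : Λ.d η = Pi.single j 1 := d_initSeg _ _ _
      obtain ⟨-, hm'⟩ := hlc i j hij g η (by rw [hg, hrη]) hdg hdη
      obtain ⟨m', hm'1, hm'2⟩ := hm'
      have hdρ : Λ.d ρ = fun i' => Λ.d ξ i' - (Pi.single j 1 : Fin k → ℕ) i' :=
        d_tailSeg ξ (Pi.single j 1) hle
      have hsρξ : Λ.src ρ = Λ.src ξ := src_tailSeg _ _ _
      rw [← hsρξ]
      refine ih (∑ j', Λ.d ρ j') ?_ ρ rfl i ?_ ⟨m', ?_, hm'2⟩
      · rw [← hsum]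
        apply Finset.sum_lt_sum
        · intro i' _
          simp only [hdρ]
          exact Nat.sub_le _ _
        · refine ⟨j, Finset.mem_univ j, ?_⟩
          simp only [hdρ, Pi.single_eq_same]
          omega
      · simp only [hdρ]
        rw [Pi.single_eq_of_ne hij]
        omega
      · rw [hm'1, rng_tailSeg]

/-- Powers of a return path, with range, source and degree data. -/
noncomputable def powAux (Λ : KGraph k) (L : Λ.Path) (hloop : Λ.rng L = Λ.src L) :
    (n : ℕ) → {l : Λ.Path // Λ.rng l = Λ.rng L ∧ Λ.src l = Λ.src L ∧ Λ.d l = n • Λ.d L}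
  | 0 => ⟨Λ.ident (Λ.src L), by
      refine ⟨by rw [Λ.rng_ident, hloop], by rw [Λ.src_ident], ?_⟩
      rw [Λ.d_ident, zero_smul]⟩
  | n+1 =>
    let p := powAux Λ L hloop n
    ⟨Λ.comp L p.1 (by rw [p.2.1]; exact hloop.symm), by
      refine ⟨by rw [Λ.rng_comp], by rw [Λ.src_comp, p.2.2.1], ?_⟩
      rw [Λ.d_comp, p.2.2.2, succ_nsmul, add_comm]⟩

lemma powAux_index_congr {L : Λ.Path} (hloop : Λ.rng L = Λ.src L) {n n' : ℕ} (h : n = n') :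
    (Λ.powAux L hloop n).1 = (Λ.powAux L hloop n').1 := by subst h; rfl

lemma powAux_add {L : Λ.Path} (hloop : Λ.rng L = Λ.src L) (a b : ℕ)
    (hc : Λ.src (Λ.powAux L hloop a).1 = Λ.rng (Λ.powAux L hloop b).1) :
    (Λ.powAux L hloop (a + b)).1
      = Λ.comp (Λ.powAux L hloop a).1 (Λ.powAux L hloop b).1 hc := by
  induction a with
  | zero =>
    show (Λ.powAux L hloop (0+b)).1 = _
    rw [powAux_index_congr hloop (Nat.zero_add b)]
    have h1 : Λ.ident (Λ.src L) = Λ.ident (Λ.rng (Λ.powAux L hloop b).1) := by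
      rw [(Λ.powAux L hloop b).2.1, hloop]
    calc (Λ.powAux L hloop b).1
        = Λ.comp (Λ.ident (Λ.rng (Λ.powAux L hloop b).1)) (Λ.powAux L hloop b).1
            (by rw [Λ.src_ident]) := (Λ.ident_comp _ _).symm
      _ = _ := comp_congr h1.symm rfl _ _
  | succ a iha =>
    have hca : Λ.src (Λ.powAux L hloop a).1 = Λ.rng (Λ.powAux L hloop b).1 := by
      rw [(Λ.powAux L hloop a).2.2.1, (Λ.powAux L hloop b).2.1, hloop]
    have hL : Λ.src L = Λ.rng (Λ.powAux L hloop (a+b)).1 := by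
      rw [(Λ.powAux L hloop (a+b)).2.1, hloop]
    have hL2 : Λ.src L = Λ.rng (Λ.comp (Λ.powAux L hloop a).1 (Λ.powAux L hloop b).1 hca) := by
      rw [Λ.rng_comp, (Λ.powAux L hloop a).2.1, hloop]
    have h3 : Λ.src (Λ.comp L (Λ.powAux L hloop a).1 (by rw [(Λ.powAux L hloop a).2.1]; exact hloop.symm))
        = Λ.rng (Λ.powAux L hloop b).1 := by rw [Λ.src_comp]; exact hca
    calc (Λ.powAux L hloop (a+1+b)).1
        = (Λ.powAux L hloop ((a+b)+1)).1 := powAux_index_congr hloop (by omega)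
      _ = Λ.comp L (Λ.powAux L hloop (a+b)).1 hL := rfl
      _ = Λ.comp L (Λ.comp (Λ.powAux L hloop a).1 (Λ.powAux L hloop b).1 hca) hL2 :=
          comp_congr rfl (iha hca) _ _
      _ = Λ.comp (Λ.comp L (Λ.powAux L hloop a).1 _) (Λ.powAux L hloop b).1 h3 :=
          (Λ.comp_assoc _ _ _ _ hca h3 hL2).symm
      _ = _ := comp_congr rfl rfl _ _

/-- Pulling an `eᵢ`-edge at `src L` backwards through the loop `L`. -/
noncomputable def pullF (Λ : KGraph k) (L : Λ.Path) (hloop : Λ.rng L = Λ.src L) (i : Fin k)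
    (g : {g : Λ.Path // Λ.rng g = Λ.src L ∧ Λ.d g = Pi.single i 1}) :
    {g : Λ.Path // Λ.rng g = Λ.src L ∧ Λ.d g = Pi.single i 1} :=
  ⟨Λ.initSeg (Λ.comp L g.1 (g.2.1.symm)) (Pi.single i 1)
      (by intro i'
          rw [Λ.d_comp, Pi.add_apply, g.2.2]
          exact Nat.le_add_left _ _),
    by rw [rng_initSeg, Λ.rng_comp, hloop], d_initSeg _ _ _⟩

/-- The tail left over after pulling an edge through the loop. -/
lemma pullF_tail {L : Λ.Path} (hloop : Λ.rng L = Λ.src L) {i : Fin k}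
    (g : {g : Λ.Path // Λ.rng g = Λ.src L ∧ Λ.d g = Pi.single i 1}) :
    ∃ (ρ : Λ.Path) (hc : Λ.src (Λ.pullF L hloop i g).1 = Λ.rng ρ)
      (hcm : Λ.src L = Λ.rng g.1),
      Λ.comp (Λ.pullF L hloop i g).1 ρ hc = Λ.comp L g.1 hcm ∧
      Λ.d ρ = Λ.d L ∧ Λ.src ρ = Λ.src g.1 := by
  obtain ⟨hc, hl⟩ := comp_initSeg_tailSeg (Λ.comp L g.1 (g.2.1.symm))
    (Pi.single i 1) (by intro i'; rw [Λ.d_comp, Pi.add_apply, g.2.2]; exact Nat.le_add_left _ _)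
  refine ⟨_, hc, g.2.1.symm, hl, ?_, ?_⟩
  · rw [d_tailSeg]
    funext i'
    simp only [Λ.d_comp, Pi.add_apply, g.2.2]
    omega
  · rw [src_tailSeg, Λ.src_comp]

/-- Iterated square: `L^m ∘ g = F^[m] g ∘ ρ` with `d ρ = m • d L`. -/
lemma pullF_square {L : Λ.Path} (hloop : Λ.rng L = Λ.src L) {i : Fin k}
    (m : ℕ) (g : {g : Λ.Path // Λ.rng g = Λ.src L ∧ Λ.d g = Pi.single i 1}) :
    ∃ (ρ : Λ.Path) (hc : Λ.src ((Λ.pullF L hloop i)^[m] g).1 = Λ.rng ρ)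
      (hcm : Λ.src (Λ.powAux L hloop m).1 = Λ.rng g.1),
      Λ.comp ((Λ.pullF L hloop i)^[m] g).1 ρ hc = Λ.comp (Λ.powAux L hloop m).1 g.1 hcm ∧
      Λ.d ρ = m • Λ.d L ∧ Λ.src ρ = Λ.src g.1 := by
  induction m with
  | zero =>
    refine ⟨Λ.ident (Λ.src g.1), by simp [Λ.rng_ident], by
        rw [(Λ.powAux L hloop 0).2.2.1]; exact g.2.1.symm, ?_, by rw [Λ.d_ident, zero_smul],
      by rw [Λ.src_ident]⟩
    show Λ.comp g.1 (Λ.ident (Λ.src g.1)) _ = Λ.comp (Λ.ident (Λ.src L)) g.1 _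
    rw [Λ.comp_ident]
    have h1 : Λ.ident (Λ.src L) = Λ.ident (Λ.rng g.1) := by rw [g.2.1]
    calc g.1 = Λ.comp (Λ.ident (Λ.rng g.1)) g.1 (by rw [Λ.src_ident]) := (Λ.ident_comp _ _).symm
      _ = _ := comp_congr h1.symm rfl _ _
  | succ m ihm =>
    obtain ⟨ρ, hc, hcm, hsq, hdρ, hsρ⟩ := ihm
    set gm := (Λ.pullF L hloop i)^[m] g with hgm
    obtain ⟨ρ1, hc1, hcm1, hsq1, hdρ1, hsρ1⟩ := pullF_tail hloop gm
    -- comp of the two tails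
    have hcρ : Λ.src ρ1 = Λ.rng ρ := by rw [hsρ1]; exact hc
    refine ⟨Λ.comp ρ1 ρ hcρ, ?_, ?_, ?_, ?_, ?_⟩
    · rw [Function.iterate_succ_apply', Λ.rng_comp]
      exact hc1
    · rw [(Λ.powAux L hloop (m+1)).2.2.1]; exact g.2.1.symm
    · -- main square equation
      have e1 : Λ.src (Λ.pullF L hloop i gm).1 = Λ.rng (Λ.comp ρ1 ρ hcρ) := by
        rw [Λ.rng_comp]; exact hc1
      have step1 : Λ.comp (Λ.pullF L hloop i gm).1 (Λ.comp ρ1 ρ hcρ) e1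
          = Λ.comp (Λ.comp (Λ.pullF L hloop i gm).1 ρ1 hc1) ρ (by rw [Λ.src_comp]; exact hcρ) :=
        (Λ.comp_assoc _ _ _ hc1 hcρ _ e1).symm
      have step2 : Λ.comp (Λ.comp (Λ.pullF L hloop i gm).1 ρ1 hc1) ρ
            (by rw [Λ.src_comp]; exact hcρ)
          = Λ.comp (Λ.comp L gm.1 hcm1) ρ (by rw [Λ.src_comp]; exact hc) :=
          comp_congr hsq1 rfl _ _
      have hLgm : Λ.src L = Λ.rng gm.1 := hcm1
      have e3 : Λ.src (Λ.comp L gm.1 hLgm) = Λ.rng ρ := by rw [Λ.src_comp]; exact hc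
      have e4 : Λ.src L = Λ.rng (Λ.comp gm.1 ρ hc) := by rw [Λ.rng_comp]; exact hLgm
      have step3 : Λ.comp (Λ.comp L gm.1 hLgm) ρ e3 = Λ.comp L (Λ.comp gm.1 ρ hc) e4 :=
        Λ.comp_assoc _ _ _ hLgm hc e3 e4
      have e5 : Λ.src L = Λ.rng (Λ.comp (Λ.powAux L hloop m).1 g.1 hcm) := by
        rw [Λ.rng_comp, (Λ.powAux L hloop m).2.1]; exact hloop.symm
      have step4 : Λ.comp L (Λ.comp gm.1 ρ hc) e4
          = Λ.comp L (Λ.comp (Λ.powAux L hloop m).1 g.1 hcm) e5 := comp_congr rfl hsq _ _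
      have e6 : Λ.src (Λ.comp L (Λ.powAux L hloop m).1
          (by rw [(Λ.powAux L hloop m).2.1]; exact hloop.symm)) = Λ.rng g.1 := by
        rw [Λ.src_comp, (Λ.powAux L hloop m).2.2.1]; exact g.2.1.symm
      have step5 : Λ.comp L (Λ.comp (Λ.powAux L hloop m).1 g.1 hcm) e5
          = Λ.comp (Λ.comp L (Λ.powAux L hloop m).1 _) g.1 e6 :=
        (Λ.comp_assoc _ _ _ _ hcm e6 e5).symm
      calc Λ.comp ((Λ.pullF L hloop i)^[m+1] g).1 (Λ.comp ρ1 ρ hcρ) _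
          = Λ.comp (Λ.pullF L hloop i gm).1 (Λ.comp ρ1 ρ hcρ) e1 := by
            exact comp_congr (by rw [Function.iterate_succ_apply', hgm]) rfl _ _
        _ = _ := step1.trans (step2.trans (step3.trans (step4.trans step5)))
    · rw [Λ.d_comp, hdρ1, hdρ, succ_nsmul, add_comm]
    · rw [Λ.src_comp]; exact hsρ
end KGraph
namespace KGraph

variable {k : ℕ} {Λ : KGraph k}

lemma initSeg_deg_congr {l : Λ.Path} {m m' : Fin k → ℕ} (hmm : m = m')
    (h : ∀ i, m i ≤ Λ.d l i) (h' : ∀ i, m' i ≤ Λ.d l i) :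
    Λ.initSeg l m h = Λ.initSeg l m' h' := by subst hmm; rfl

lemma initSeg_append {X Y : Λ.Path} (hc : Λ.src X = Λ.rng Y) {n : Fin k → ℕ}
    (hn : ∀ i, n i ≤ Λ.d Y i)
    (h' : ∀ i, (Λ.d X + n) i ≤ Λ.d (Λ.comp X Y hc) i) :
    Λ.initSeg (Λ.comp X Y hc) (Λ.d X + n) h'
      = Λ.comp X (Λ.initSeg Y n hn) (by rw [rng_initSeg]; exact hc) := by
  obtain ⟨hc2, hl2⟩ := comp_initSeg_tailSeg Y n hn
  have hXi : Λ.src X = Λ.rng (Λ.initSeg Y n hn) := by rw [rng_initSeg]; exact hc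
  have h5 : Λ.src (Λ.comp X (Λ.initSeg Y n hn) hXi) = Λ.rng (Λ.tailSeg Y n hn) := by
    rw [Λ.src_comp]; exact hc2
  have key : Λ.comp (Λ.comp X (Λ.initSeg Y n hn) hXi) (Λ.tailSeg Y n hn) h5
      = Λ.comp X Y hc := by
    rw [Λ.comp_assoc _ _ _ hXi hc2 h5 (by rw [Λ.rng_comp]; exact hXi)]
    exact comp_congr rfl hl2 _ _
  have hd : Λ.d (Λ.comp X (Λ.initSeg Y n hn) hXi) = Λ.d X + n := by
    rw [Λ.d_comp, d_initSeg]
  exact (split_unique h5 key hd h').1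

lemma exists_periodic_point {β : Type} [Finite β] (f : β → β) (b : β) :
    ∃ (s P : ℕ), 0 < P ∧ f^[P] (f^[s] b) = f^[s] b := by
  obtain ⟨m, n, hmn, heq⟩ := Finite.exists_ne_map_eq_of_infinite (fun t : ℕ => f^[t] b)
  rcases lt_or_gt_of_ne hmn with h | h
  · refine ⟨m, n - m, by omega, ?_⟩
    rw [← Function.iterate_add_apply, (by omega : n - m + m = n)]
    exact heq.symm
  · refine ⟨n, m - n, by omega, ?_⟩
    rw [← Function.iterate_add_apply, (by omega : m - n + n = m)]
    exact heq

lemma iterate_periodic {β : Type} (f : β → β) (b : β) (P : ℕ) (h : f^[P] b = b) :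
    ∀ r, f^[r * P] b = b := by
  intro r
  induction r with
  | zero => simp
  | succ r ih => rw [(by ring : (r + 1) * P = P + r * P), Function.iterate_add_apply, ih, h]

/-- The key propagation lemma: if `L` is a return path with an entrance and `src L`
emits an edge of degree `eᵢ` with `d L i = 0`, then there is such an edge `g` whose
source carries a return path `L'` of degree `N • d L` with an entrance. -/
lemma propagation (hrf : Λ.RowFinite) (hlc : Λ.LocallyConvex)
    {L : Λ.Path} (hloop : Λ.rng L = Λ.src L) (hent : Λ.HasEntrance L)
    {i : Fin k} (hi : Λ.d L i = 0)
    (hem : ∃ g, Λ.rng g = Λ.src L ∧ Λ.d g = Pi.single i 1) :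
    ∃ (g L' : Λ.Path) (N : ℕ), Λ.rng g = Λ.src L ∧ Λ.d g = Pi.single i 1 ∧
      Λ.rng L' = Λ.src g ∧ Λ.src L' = Λ.src g ∧ Λ.d L' = N • Λ.d L ∧ 1 ≤ N ∧
      Λ.HasEntrance L' := by
  obtain ⟨δ, hδle, hδrng, hδne⟩ := hent
  obtain ⟨g0, hg0rng, hg0d⟩ := hem
  have hδi : Λ.d δ i = 0 := by have := hδle i; omega
  -- the source of the entrance emits an `eᵢ` edge
  obtain ⟨h', hh'rng, hh'd⟩ := emits_down hlc (∑ j, Λ.d δ j) δ rfl i hδi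
    ⟨g0, hg0rng.trans hδrng.symm, hg0d⟩
  -- Ξ0 = δ · h'
  have hcδ : Λ.src δ = Λ.rng h' := hh'rng.symm
  set Ξ0 := Λ.comp δ h' hcδ with hΞ0
  have hdΞ0 : Λ.d Ξ0 = Λ.d δ + Pi.single i 1 := by rw [hΞ0, Λ.d_comp, hh'd]
  have hle0 : ∀ i', (Pi.single i 1 : Fin k → ℕ) i' ≤ Λ.d Ξ0 i' := by
    intro i'; rw [hdΞ0]; exact Nat.le_add_left _ _
  obtain ⟨hc0, hl0⟩ := comp_initSeg_tailSeg Ξ0 (Pi.single i 1) hle0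
  set tail0 := Λ.tailSeg Ξ0 (Pi.single i 1) hle0 with htail0
  have hrngg' : Λ.rng (Λ.initSeg Ξ0 (Pi.single i 1) hle0) = Λ.src L := by
    rw [rng_initSeg, hΞ0, Λ.rng_comp, hδrng]
  set g' : {g : Λ.Path // Λ.rng g = Λ.src L ∧ Λ.d g = Pi.single i 1} :=
    ⟨Λ.initSeg Ξ0 (Pi.single i 1) hle0, hrngg', d_initSeg _ _ _⟩ with hg'
  have hdtail0 : Λ.d tail0 = Λ.d δ := by
    rw [htail0, d_tailSeg]
    funext i'
    rw [hdΞ0]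
    simp only [Pi.add_apply]
    omega
  -- finiteness and periodicity
  have hfin : Finite {g : Λ.Path // Λ.rng g = Λ.src L ∧ Λ.d g = Pi.single i 1} :=
    (hrf (Λ.src L) (Pi.single i 1)).to_subtype
  obtain ⟨s, P, hP, hper⟩ := exists_periodic_point (Λ.pullF L hloop i) g'
  set g := (Λ.pullF L hloop i)^[s] g' with hgdef
  set N := (s + 1) * P with hN
  have hperN : (Λ.pullF L hloop i)^[N] g = g :=
    iterate_periodic (Λ.pullF L hloop i) g P hper (s + 1)
  -- the transported loop
  obtain ⟨ρ, hcρ, hcmρ, hsqρ, hdρ, hsρ⟩ := pullF_square hloop N g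
  set L' := ρ with hL'
  have hrngL' : Λ.rng L' = Λ.src g.1 := by
    have := hcρ
    rw [hperN] at this
    exact this.symm
  -- the transported entrance
  obtain ⟨ρs, hcρs, hcmρs, hsqρs, hdρs, hsρs⟩ := pullF_square hloop s g'
  have hcc : Λ.src ρs = Λ.rng tail0 := by
    rw [hsρs, htail0, rng_tailSeg]
  set ε := Λ.comp ρs tail0 hcc with hε
  have hdε : Λ.d ε = s • Λ.d L + Λ.d δ := by rw [hε, Λ.d_comp, hdρs, hdtail0]
  have hrngε : Λ.rng ε = Λ.src g.1 := by
    rw [hε, Λ.rng_comp, ← hcρs, hgdef]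
  have hεle : ∀ i', Λ.d ε i' ≤ Λ.d L' i' := by
    intro i'
    rw [hdε, hdρ, hN]
    simp only [Pi.add_apply, Pi.smul_apply, smul_eq_mul]
    have h1 := hδle i'
    have h2 : (s + 1) * 1 ≤ (s + 1) * P := Nat.mul_le_mul_left _ hP
    nlinarith [Nat.zero_le (Λ.d L i')]
  refine ⟨g.1, L', N, g.2.1, g.2.2, hrngL', by rw [hL', hsρ], by rw [hL', hdρ],
    by rw [hN]; exact Nat.mul_pos (Nat.succ_pos s) hP, ?_⟩
  -- HasEntrance L'
  refine ⟨ε, hεle, by rw [hrngε, hL', hsρ], ?_⟩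
  intro hεeq
  -- W = g · L'
  have hgL' : Λ.src g.1 = Λ.rng L' := hrngL'.symm
  set W := Λ.comp g.1 L' hgL' with hW
  -- L' = ε · C3
  obtain ⟨hc3, hl3⟩ := comp_initSeg_tailSeg L' (Λ.d ε) hεle
  set C3 := Λ.tailSeg L' (Λ.d ε) hεle with hC3
  have hc3ε : Λ.src ε = Λ.rng C3 := by rw [← hεeq]; exact hc3
  have hl3' : Λ.comp ε C3 hc3ε = L' := (comp_congr hεeq.symm rfl _ _).trans hl3
  -- K = g · ε
  have hgε : Λ.src g.1 = Λ.rng ε := hrngε.symm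
  set K := Λ.comp g.1 ε hgε with hK
  have hKC : Λ.src K = Λ.rng C3 := by rw [hK, Λ.src_comp]; exact hc3ε
  have hWK : Λ.comp K C3 hKC = W := by
    have e0 : Λ.comp K C3 hKC
        = Λ.comp (Λ.comp g.1 ε hgε) C3 (by rw [Λ.src_comp]; exact hc3ε) :=
      comp_congr hK rfl _ _
    refine e0.trans ?_
    calc Λ.comp (Λ.comp g.1 ε hgε) C3 (by rw [Λ.src_comp]; exact hc3ε)
        = Λ.comp g.1 (Λ.comp ε C3 hc3ε) (by rw [Λ.rng_comp]; exact hgε) :=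
        Λ.comp_assoc g.1 ε C3 hgε hc3ε _ _
      _ = Λ.comp g.1 L' hgL' := comp_congr rfl hl3' _ _
      _ = W := hW.symm
  have hKle : ∀ i', Λ.d K i' ≤ Λ.d W i' := d_le_of_comp hKC hWK
  have e_left : Λ.initSeg W (Λ.d K) hKle = K := (split_unique hKC hWK rfl hKle).1
  -- V = (pow s) · Ξ0  equals K
  have hpΞ : Λ.src (Λ.powAux L hloop s).1 = Λ.rng Ξ0 := by
    rw [(Λ.powAux L hloop s).2.2.1, hΞ0, Λ.rng_comp, hδrng]
  set V := Λ.comp (Λ.powAux L hloop s).1 Ξ0 hpΞ with hV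
  have hVK : V = K := by
    have hsg' : Λ.src (Λ.powAux L hloop s).1 = Λ.rng g'.1 := by
      rw [(Λ.powAux L hloop s).2.2.1, g'.2.1]
    have st1 : V = Λ.comp (Λ.powAux L hloop s).1 (Λ.comp g'.1 tail0 hc0) (by
        rw [Λ.rng_comp]; exact hsg') := by
      rw [hV]; exact comp_congr rfl hl0.symm _ _
    have hctm : Λ.src (Λ.comp (Λ.powAux L hloop s).1 g'.1 hsg') = Λ.rng tail0 := by
      rw [Λ.src_comp]; exact hc0
    have st2 : Λ.comp (Λ.powAux L hloop s).1 (Λ.comp g'.1 tail0 hc0) (by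
        rw [Λ.rng_comp]; exact hsg')
        = Λ.comp (Λ.comp (Λ.powAux L hloop s).1 g'.1 hsg') tail0 hctm :=
      (Λ.comp_assoc _ _ _ hsg' hc0 hctm _).symm
    have hFsρ : Λ.src ((Λ.pullF L hloop i)^[s] g').1 = Λ.rng ρs := hcρs
    have st3 : Λ.comp (Λ.comp (Λ.powAux L hloop s).1 g'.1 hsg') tail0 hctm
        = Λ.comp (Λ.comp ((Λ.pullF L hloop i)^[s] g').1 ρs hFsρ) tail0 (by rw [Λ.src_comp]; exact hcc) :=
      comp_congr hsqρs.symm rfl _ _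
    have st4 : Λ.comp (Λ.comp ((Λ.pullF L hloop i)^[s] g').1 ρs hFsρ) tail0 (by rw [Λ.src_comp]; exact hcc)
        = Λ.comp ((Λ.pullF L hloop i)^[s] g').1 (Λ.comp ρs tail0 hcc) (by rw [Λ.rng_comp]; exact hFsρ) :=
      Λ.comp_assoc _ _ _ hFsρ hcc _ _
    have st5 : Λ.comp ((Λ.pullF L hloop i)^[s] g').1 (Λ.comp ρs tail0 hcc) (by rw [Λ.rng_comp]; exact hFsρ)
        = K := comp_congr rfl rfl _ _
    exact st1.trans (st2.trans (st3.trans (st4.trans st5)))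
  -- W = (pow N) · g
  have hWpow : W = Λ.comp (Λ.powAux L hloop N).1 g.1 hcmρ := by
    rw [← hsqρ, hW]
    exact comp_congr (by rw [hperN]) rfl _ _
  -- decompose pow N = pow s · initSeg L q0 · REST
  have ht : N = s + (1 + (N - s - 1)) := by
    have : s + 1 ≤ N := by
      rw [hN]
      calc s + 1 = (s+1) * 1 := by ring
        _ ≤ (s+1) * P := Nat.mul_le_mul_left _ hP
    omega
  set t := N - s - 1 with htdef
  -- X = pow s · initSeg L q0
  have hq0le : ∀ i', Λ.d δ i' ≤ Λ.d L i' := hδle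
  have hXc : Λ.src (Λ.powAux L hloop s).1 = Λ.rng (Λ.initSeg L (Λ.d δ) hδle) := by
    rw [(Λ.powAux L hloop s).2.2.1, rng_initSeg]; exact hloop.symm
  set X := Λ.comp (Λ.powAux L hloop s).1 (Λ.initSeg L (Λ.d δ) hδle) hXc with hX
  -- Y = (tailSeg L q0 · pow t) · g
  have hYc1 : Λ.src (Λ.tailSeg L (Λ.d δ) hδle) = Λ.rng (Λ.powAux L hloop t).1 := by
    rw [src_tailSeg, (Λ.powAux L hloop t).2.1]; exact hloop.symm
  have hYc2 : Λ.src (Λ.comp (Λ.tailSeg L (Λ.d δ) hδle) (Λ.powAux L hloop t).1 hYc1)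
      = Λ.rng g.1 := by
    rw [Λ.src_comp, (Λ.powAux L hloop t).2.2.1, g.2.1]
  set Y := Λ.comp (Λ.comp (Λ.tailSeg L (Λ.d δ) hδle) (Λ.powAux L hloop t).1 hYc1) g.1 hYc2
    with hY
  have hXY : Λ.src X = Λ.rng Y := by
    rw [hX, hY, Λ.src_comp, Λ.rng_comp, Λ.rng_comp, rng_tailSeg]
  have hWXY : W = Λ.comp X Y hXY := by
    -- pow N = pow s · pow (1+t),  pow (1+t) = pow 1 · pow t,  pow 1 = L
    have hc_s_1t : Λ.src (Λ.powAux L hloop s).1 = Λ.rng (Λ.powAux L hloop (1+t)).1 := by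
      rw [(Λ.powAux L hloop s).2.2.1, (Λ.powAux L hloop (1+t)).2.1]; exact hloop.symm
    have hpowN : (Λ.powAux L hloop N).1
        = Λ.comp (Λ.powAux L hloop s).1 (Λ.powAux L hloop (1+t)).1 hc_s_1t := by
      rw [powAux_index_congr hloop ht]
      exact powAux_add hloop s (1+t) hc_s_1t
    have hpow1 : (Λ.powAux L hloop 1).1 = L := Λ.comp_ident L _
    have hc_1_t : Λ.src (Λ.powAux L hloop 1).1 = Λ.rng (Λ.powAux L hloop t).1 := by
      rw [(Λ.powAux L hloop 1).2.2.1, (Λ.powAux L hloop t).2.1]; exact hloop.symm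
    have hpow1t : (Λ.powAux L hloop (1+t)).1
        = Λ.comp (Λ.powAux L hloop 1).1 (Λ.powAux L hloop t).1 hc_1_t :=
      powAux_add hloop 1 t hc_1_t
    have hcLt : Λ.src L = Λ.rng (Λ.powAux L hloop t).1 := by
      rw [(Λ.powAux L hloop t).2.1]; exact hloop.symm
    have hpow1t' : (Λ.powAux L hloop (1+t)).1 = Λ.comp L (Λ.powAux L hloop t).1 hcLt := by
      rw [hpow1t]; exact comp_congr hpow1 rfl _ _
    -- L = initSeg · tailSeg
    obtain ⟨hcL, hlL⟩ := comp_initSeg_tailSeg L (Λ.d δ) hδle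
    -- assemble
    have hcIT_t : Λ.src (Λ.comp (Λ.initSeg L (Λ.d δ) hδle) (Λ.tailSeg L (Λ.d δ) hδle) hcL)
        = Λ.rng (Λ.powAux L hloop t).1 := by rw [Λ.src_comp]; exact hYc1
    have e1 : (Λ.powAux L hloop (1+t)).1
        = Λ.comp (Λ.comp (Λ.initSeg L (Λ.d δ) hδle) (Λ.tailSeg L (Λ.d δ) hδle) hcL)
            (Λ.powAux L hloop t).1 hcIT_t := by
      rw [hpow1t']; exact comp_congr hlL.symm rfl _ _
    have hcI_Tt : Λ.src (Λ.initSeg L (Λ.d δ) hδle)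
        = Λ.rng (Λ.comp (Λ.tailSeg L (Λ.d δ) hδle) (Λ.powAux L hloop t).1 hYc1) := by
      rw [Λ.rng_comp]; exact hcL
    have e2 : (Λ.powAux L hloop (1+t)).1
        = Λ.comp (Λ.initSeg L (Λ.d δ) hδle)
            (Λ.comp (Λ.tailSeg L (Λ.d δ) hδle) (Λ.powAux L hloop t).1 hYc1) hcI_Tt := by
      rw [e1]; exact Λ.comp_assoc _ _ _ hcL hYc1 hcIT_t hcI_Tt
    -- W = (pow s · (initSeg · (tail · pow t))) · g
    have hc_ps : Λ.src (Λ.powAux L hloop s).1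
        = Λ.rng (Λ.comp (Λ.initSeg L (Λ.d δ) hδle)
            (Λ.comp (Λ.tailSeg L (Λ.d δ) hδle) (Λ.powAux L hloop t).1 hYc1) hcI_Tt) := by
      rw [Λ.rng_comp, rng_initSeg, (Λ.powAux L hloop s).2.2.1]; exact hloop.symm
    have e3 : (Λ.powAux L hloop N).1
        = Λ.comp (Λ.powAux L hloop s).1
            (Λ.comp (Λ.initSeg L (Λ.d δ) hδle)
              (Λ.comp (Λ.tailSeg L (Λ.d δ) hδle) (Λ.powAux L hloop t).1 hYc1) hcI_Tt)
            hc_ps := by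
      rw [hpowN]; exact comp_congr rfl e2 _ _
    have hcX_Tt : Λ.src X
        = Λ.rng (Λ.comp (Λ.tailSeg L (Λ.d δ) hδle) (Λ.powAux L hloop t).1 hYc1) := by
      rw [hX, Λ.src_comp]; exact hcI_Tt
    have e4 : (Λ.powAux L hloop N).1
        = Λ.comp X (Λ.comp (Λ.tailSeg L (Λ.d δ) hδle) (Λ.powAux L hloop t).1 hYc1)
            hcX_Tt :=
      e3.trans (Λ.comp_assoc _ _ _ hXc hcI_Tt hcX_Tt hc_ps).symm
    have hcPN_g : Λ.src (Λ.powAux L hloop N).1 = Λ.rng g.1 := hcmρ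
    have e5 : W = Λ.comp (Λ.comp X
        (Λ.comp (Λ.tailSeg L (Λ.d δ) hδle) (Λ.powAux L hloop t).1 hYc1) hcX_Tt) g.1
        (by rw [Λ.src_comp]; exact hYc2) := by
      rw [hWpow]
      exact comp_congr e4 rfl _ _
    have hassocf := Λ.comp_assoc X
      (Λ.comp (Λ.tailSeg L (Λ.d δ) hδle) (Λ.powAux L hloop t).1 hYc1) g.1
      hcX_Tt hYc2 (by rw [Λ.src_comp]; exact hYc2) (by rw [Λ.rng_comp]; exact hcX_Tt)
    refine e5.trans (hassocf.trans ?_)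
    exact comp_congr rfl (by rw [hY]) _ _
  -- compute the two initial segments of V
  have hsingle_le_Y : ∀ i', (Pi.single i 1 : Fin k → ℕ) i' ≤ Λ.d Y i' := by
    intro i'
    rw [hY, Λ.d_comp, Pi.add_apply, g.2.2]
    exact Nat.le_add_left _ _
  have hdXn : Λ.d X + (Pi.single i 1 : Fin k → ℕ) = Λ.d K := by
    rw [hX, hK, Λ.d_comp, Λ.d_comp, (Λ.powAux L hloop s).2.2.2, d_initSeg, g.2.2, hdε]
    funext i'
    simp only [Pi.add_apply]
    omega
  have hKle' : ∀ i', (Λ.d X + (Pi.single i 1 : Fin k → ℕ)) i' ≤ Λ.d W i' := by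
    intro i'; rw [hdXn]; exact hKle i'
  have e_right : Λ.initSeg W (Λ.d X + (Pi.single i 1 : Fin k → ℕ)) hKle'
      = Λ.comp X (Λ.initSeg Y (Pi.single i 1) hsingle_le_Y)
          (by rw [rng_initSeg]; exact hXY) := by
    have := initSeg_append (X := X) (Y := Y) hXY hsingle_le_Y
      (by intro i'; rw [← hWXY]; exact hKle' i')
    calc Λ.initSeg W (Λ.d X + (Pi.single i 1 : Fin k → ℕ)) hKle'
        = Λ.initSeg (Λ.comp X Y hXY) (Λ.d X + (Pi.single i 1 : Fin k → ℕ))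
            (by intro i'; rw [← hWXY]; exact hKle' i') := initSeg_congr hWXY _ _
      _ = _ := this
  have hKXgHat : K = Λ.comp X (Λ.initSeg Y (Pi.single i 1) hsingle_le_Y)
      (by rw [rng_initSeg]; exact hXY) := by
    rw [← e_left]
    rw [initSeg_deg_congr hdXn.symm hKle hKle']
    exact e_right
  -- V = (pow s · δ) · h'
  have hcpδ : Λ.src (Λ.powAux L hloop s).1 = Λ.rng δ := by
    rw [(Λ.powAux L hloop s).2.2.1, hδrng]
  have hcpδh : Λ.src (Λ.comp (Λ.powAux L hloop s).1 δ hcpδ) = Λ.rng h' := by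
    rw [Λ.src_comp]; exact hcδ
  have hVpδh : Λ.comp (Λ.comp (Λ.powAux L hloop s).1 δ hcpδ) h' hcpδh = V :=
    Λ.comp_assoc _ _ _ hcpδ hcδ hcpδh hpΞ
  have hdpδ : Λ.d (Λ.comp (Λ.powAux L hloop s).1 δ hcpδ) = s • Λ.d L + Λ.d δ := by
    rw [Λ.d_comp, (Λ.powAux L hloop s).2.2.2]
  have hVle : ∀ i', (s • Λ.d L + Λ.d δ) i' ≤ Λ.d V i' := by
    intro i'
    rw [← hVpδh, Λ.d_comp, hdpδ]
    exact Nat.le_add_right _ _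
  have eV1 : Λ.initSeg V (s • Λ.d L + Λ.d δ) hVle = Λ.comp (Λ.powAux L hloop s).1 δ hcpδ :=
    (split_unique hcpδh hVpδh hdpδ hVle).1
  -- the other expression for the same initial segment
  have hdX' : Λ.d X = s • Λ.d L + Λ.d δ := by
    rw [hX, Λ.d_comp, (Λ.powAux L hloop s).2.2.2, d_initSeg]
  have hXc2 : Λ.src X = Λ.rng (Λ.initSeg Y (Pi.single i 1) hsingle_le_Y) := by
    rw [rng_initSeg]; exact hXY
  have hVle2 : ∀ i', Λ.d X i' ≤ Λ.d V i' := by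
    intro i'; rw [hdX']; exact hVle i'
  have eV2 : Λ.initSeg V (Λ.d X) hVle2 = X := by
    have hVKX : Λ.comp X (Λ.initSeg Y (Pi.single i 1) hsingle_le_Y) hXc2 = V := by
      rw [hVK, hKXgHat]
    exact (split_unique hXc2 hVKX rfl hVle2).1
  have efinal : Λ.comp (Λ.powAux L hloop s).1 δ hcpδ = X := by
    rw [← eV1, ← eV2]
    exact initSeg_deg_congr hdX'.symm _ _
  have hfu := Λ.factor_unique (Λ.powAux L hloop s).1 δ (Λ.powAux L hloop s).1
    (Λ.initSeg L (Λ.d δ) hδle) hcpδ hXc rfl (by rw [efinal, hX])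
  exact hδne hfu.2.symm

end KGraph
namespace KGraph

variable {k : ℕ} {Λ : KGraph k}

lemma seg_eq_two {l A B : Λ.Path} {p q : Fin k → ℕ} (hc : Λ.src A = Λ.rng B)
    (hl : Λ.comp A B hc = l) (hp : Λ.d A = p) (hdB : Λ.d B = fun i => q i - p i)
    (hpq : ∀ i, p i ≤ q i) (hq : ∀ i, q i ≤ Λ.d l i) :
    Λ.seg l p q hpq hq = B := by
  have hc2 : Λ.src B = Λ.rng (Λ.ident (Λ.src B)) := (Λ.rng_ident _).symm
  have hBid : Λ.comp B (Λ.ident (Λ.src B)) hc2 = B := Λ.comp_ident _ _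
  have h12 : Λ.src A = Λ.rng (Λ.comp B (Λ.ident (Λ.src B)) hc2) := by
    rw [Λ.rng_comp]; exact hc
  refine seg_eq hc2 h12 ?_ hp hdB hpq hq
  exact (comp_congr rfl hBid _ _).trans hl

/-- The state maintained by the inductive construction: a return path with an entrance
whose degree is a positive multiple of `a`. -/
structure LoopState (Λ : KGraph k) (a : Fin k → ℕ) where
  L : Λ.Path
  hloop : Λ.rng L = Λ.src L
  hent : Λ.HasEntrance L
  hd : ∃ N, 1 ≤ N ∧ Λ.d L = N • a

lemma stepState_ex (hrf : Λ.RowFinite) (hlc : Λ.LocallyConvex) {a : Fin k → ℕ}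
    (st : LoopState Λ a) (i : Fin k) :
    ∃ pr : LoopState Λ a × Λ.Path,
      Λ.rng pr.2 = Λ.src st.L ∧ Λ.src pr.2 = Λ.rng pr.1.L ∧
      (¬(a i = 0 ∧ ∃ g, Λ.rng g = Λ.src st.L ∧ Λ.d g = Pi.single i 1) →
        pr.1 = st ∧ Λ.d pr.2 = 0) ∧
      ((a i = 0 ∧ ∃ g, Λ.rng g = Λ.src st.L ∧ Λ.d g = Pi.single i 1) →
        Λ.d pr.2 = Pi.single i 1) := by
  by_cases h : a i = 0 ∧ ∃ g, Λ.rng g = Λ.src st.L ∧ Λ.d g = Pi.single i 1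
  · obtain ⟨N, hN1, hda⟩ := st.hd
    have hdLi : Λ.d st.L i = 0 := by
      rw [hda]; simp [h.1]
    obtain ⟨g, L', N', hg1, hg2, hr', hs', hd', hN', hent'⟩ :=
      propagation hrf hlc st.hloop st.hent hdLi h.2
    refine ⟨⟨⟨L', hr'.trans hs'.symm, hent', ⟨N' * N, ?_, ?_⟩⟩, g⟩, hg1, hr'.symm,
      fun hcon => absurd h hcon, fun _ => hg2⟩
    · have := Nat.mul_le_mul hN' hN1; simpa using this
    · rw [hd', hda, smul_smul]
  · exact ⟨⟨st, Λ.ident (Λ.src st.L)⟩, Λ.rng_ident _, (Λ.src_ident _).trans st.hloop.symm,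
      fun _ => ⟨rfl, Λ.d_ident _⟩, fun hcon => absurd hcon h⟩

/-- All the data needed for the construction. -/
structure BSetup (Λ : KGraph k) where
  hk : 0 < k
  a : Fin k → ℕ
  hrf : Λ.RowFinite
  hlc : Λ.LocallyConvex
  st0 : LoopState Λ a

namespace BSetup

variable (B : BSetup Λ)

/-- The scheduled direction in round `j`. -/
def dir (j : ℕ) : Fin k := ⟨j % k, Nat.mod_lt j B.hk⟩

/-- The sequence of states. -/
noncomputable def states : ℕ → LoopState Λ B.a
  | 0 => B.st0
  | j+1 => (stepState_ex B.hrf B.hlc (states j) (B.dir j)).choose.1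

/-- The connecting paths. -/
noncomputable def conn (j : ℕ) : Λ.Path :=
  (stepState_ex B.hrf B.hlc (B.states j) (B.dir j)).choose.2

lemma chain_spec (j : ℕ) :
    Λ.rng (B.conn j) = Λ.src (B.states j).L ∧
    Λ.src (B.conn j) = Λ.rng (B.states (j+1)).L ∧
    (¬(B.a (B.dir j) = 0 ∧ ∃ g, Λ.rng g = Λ.src (B.states j).L ∧
        Λ.d g = Pi.single (B.dir j) 1) →
      B.states (j+1) = B.states j ∧ Λ.d (B.conn j) = 0) ∧
    ((B.a (B.dir j) = 0 ∧ ∃ g, Λ.rng g = Λ.src (B.states j).L ∧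
        Λ.d g = Pi.single (B.dir j) 1) →
      Λ.d (B.conn j) = Pi.single (B.dir j) 1) := by
  have h := (stepState_ex B.hrf B.hlc (B.states j) (B.dir j)).choose_spec
  have hs : B.states (j + 1) = (stepState_ex B.hrf B.hlc (B.states j) (B.dir j)).choose.1 := by
    simp only [states]
  rw [hs]
  exact h

/-- The interleaved chain of paths: loops at even places, connectors at odd places. -/
noncomputable def seq (n : ℕ) : Λ.Path :=
  if n % 2 = 0 then (B.states (n / 2)).L else B.conn (n / 2)

lemma seq_even (j : ℕ) : B.seq (2 * j) = (B.states j).L := by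
  simp only [seq]
  rw [if_pos (by omega : 2 * j % 2 = 0)]
  have h : 2 * j / 2 = j := by omega
  rw [h]

lemma seq_odd (j : ℕ) : B.seq (2 * j + 1) = B.conn j := by
  simp only [seq]
  rw [if_neg (by omega : ¬(2 * j + 1) % 2 = 0)]
  have h : (2 * j + 1) / 2 = j := by omega
  rw [h]

lemma seq_compat (n : ℕ) : Λ.src (B.seq n) = Λ.rng (B.seq (n + 1)) := by
  by_cases h : n % 2 = 0
  · have h1 : ¬(n + 1) % 2 = 0 := by omega
    simp only [seq]
    rw [if_pos h, if_neg h1]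
    have : (n + 1) / 2 = n / 2 := by omega
    rw [this]
    exact (B.chain_spec (n / 2)).1.symm
  · have h1 : (n + 1) % 2 = 0 := by omega
    simp only [seq]
    rw [if_neg h, if_pos h1]
    have : (n + 1) / 2 = n / 2 + 1 := by omega
    rw [this]
    exact (B.chain_spec (n / 2)).2.1

/-- Partial composites of the chain. -/
noncomputable def PC : (n : ℕ) → {l : Λ.Path // Λ.src l = Λ.rng (B.seq n)}
  | 0 => ⟨Λ.ident (Λ.rng (B.seq 0)), Λ.src_ident _⟩
  | n+1 => ⟨Λ.comp (PC n).1 (B.seq n) (PC n).2,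
      by rw [Λ.src_comp]; exact B.seq_compat n⟩

lemma PC_succ (n : ℕ) :
    (B.PC (n + 1)).1 = Λ.comp (B.PC n).1 (B.seq n) (B.PC n).2 := by
  simp only [PC]

/-- Partial degree sums. -/
noncomputable def pdeg (n : ℕ) : Fin k → ℕ := Λ.d (B.PC n).1

lemma pdeg_succ (n : ℕ) : B.pdeg (n + 1) = B.pdeg n + Λ.d (B.seq n) := Λ.d_comp _ _ _

lemma pdeg_mono {n n' : ℕ} (h : n ≤ n') : ∀ i, B.pdeg n i ≤ B.pdeg n' i := by
  induction n' with
  | zero =>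
    have h0 : n = 0 := by omega
    subst h0
    exact fun i => le_refl _
  | succ n' ih =>
    intro i
    rcases Nat.lt_or_ge n (n' + 1) with h1 | h1
    · have := ih (by omega) i
      have h2 := congrFun (B.pdeg_succ n') i
      rw [Pi.add_apply] at h2
      omega
    · have : n = n' + 1 := by omega
      subst this; exact le_refl _

lemma d_stateL_ge (j : ℕ) (i : Fin k) : B.a i ≤ Λ.d (B.states j).L i := by
  obtain ⟨N, hN, hda⟩ := (B.states j).hd
  rw [hda]
  simp only [Pi.smul_apply, smul_eq_mul]
  exact Nat.le_mul_of_pos_left _ hN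

lemma pdeg_growth (j : ℕ) (i : Fin k) (ha : B.a i ≠ 0) : j ≤ B.pdeg (2 * j) i := by
  induction j with
  | zero => exact Nat.zero_le _
  | succ j ih =>
    have hidx : 2 * (j + 1) = (2 * j + 1) + 1 := by ring
    rw [hidx]
    have h1 := congrFun (B.pdeg_succ (2 * j + 1)) i
    have h2 := congrFun (B.pdeg_succ (2 * j)) i
    rw [Pi.add_apply] at h1 h2
    have h3 : Λ.d (B.seq (2 * j)) i = Λ.d (B.states j).L i := by rw [B.seq_even]
    have h4 := B.d_stateL_ge j i
    have h5 : 1 ≤ B.a i := Nat.one_le_iff_ne_zero.mpr ha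
    omega

lemma seg_PC_le {n n' : ℕ} (hnn : n ≤ n') {p q : Fin k → ℕ} (hpq : ∀ i, p i ≤ q i)
    (hq : ∀ i, q i ≤ B.pdeg n i) (hq' : ∀ i, q i ≤ B.pdeg n' i) :
    Λ.seg (B.PC n').1 p q hpq hq' = Λ.seg (B.PC n).1 p q hpq hq := by
  induction n' with
  | zero =>
    have h0 : n = 0 := by omega
    subst h0
    exact seg_congr rfl hpq hq' hq
  | succ n' ih =>
    rcases Nat.lt_or_ge n (n' + 1) with hlt | hge
    · have hn'le : n ≤ n' := by omega
      have hq'' : ∀ i, q i ≤ B.pdeg n' i := fun i => le_trans (hq i) (B.pdeg_mono hn'le i)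
      have hPC : Λ.d (Λ.comp (B.PC n').1 (B.seq n') (B.PC n').2) = B.pdeg (n' + 1) :=
        (Λ.d_comp _ _ _).trans (B.pdeg_succ n').symm
      have hq'c : ∀ i, q i ≤ Λ.d (Λ.comp (B.PC n').1 (B.seq n') (B.PC n').2) i := by
        intro i
        rw [congrFun hPC i]
        exact hq' i
      have e := seg_stable (B.PC n').2 hpq hq'' hq'c
      have e0 : Λ.seg (B.PC (n' + 1)).1 p q hpq hq'
          = Λ.seg (Λ.comp (B.PC n').1 (B.seq n') (B.PC n').2) p q hpq hq'c :=
        seg_congr (B.PC_succ n') hpq hq' hq'c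
      exact e0.trans (e.trans (ih hn'le hq''))
    · have : n = n' + 1 := by omega
      subst this
      exact seg_congr rfl hpq hq' hq

lemma vtx_PC_le {n n' : ℕ} (hnn : n ≤ n') {p : Fin k → ℕ}
    (hp : ∀ i, p i ≤ B.pdeg n i) (hp' : ∀ i, p i ≤ B.pdeg n' i) :
    Λ.vtx (B.PC n').1 p hp' = Λ.vtx (B.PC n).1 p hp := by
  induction n' with
  | zero =>
    have h0 : n = 0 := by omega
    subst h0
    exact vtx_congr rfl hp' hp
  | succ n' ih =>
    rcases Nat.lt_or_ge n (n' + 1) with hlt | hge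
    · have hn'le : n ≤ n' := by omega
      have hp'' : ∀ i, p i ≤ B.pdeg n' i := fun i => le_trans (hp i) (B.pdeg_mono hn'le i)
      have hPC : Λ.d (Λ.comp (B.PC n').1 (B.seq n') (B.PC n').2) = B.pdeg (n' + 1) :=
        (Λ.d_comp _ _ _).trans (B.pdeg_succ n').symm
      have hp'c : ∀ i, p i ≤ Λ.d (Λ.comp (B.PC n').1 (B.seq n') (B.PC n').2) i := by
        intro i
        rw [congrFun hPC i]
        exact hp' i
      have e := vtx_stable (B.PC n').2 hp'' hp'c
      have e0 : Λ.vtx (B.PC (n' + 1)).1 p hp'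
          = Λ.vtx (Λ.comp (B.PC n').1 (B.seq n') (B.PC n').2) p hp'c :=
        vtx_congr (B.PC_succ n') hp' hp'c
      exact e0.trans (e.trans (ih hn'le hp''))
    · have : n = n' + 1 := by omega
      subst this
      exact vtx_congr rfl hp' hp

/-- The degree of the boundary path. -/
noncomputable def deg (i : Fin k) : ℕ∞ := ⨆ n, ((B.pdeg n i : ℕ) : ℕ∞)

end BSetup

lemma coe_le_iSup_iff {f : ℕ → ℕ} {c : ℕ} :
    (c : ℕ∞) ≤ ⨆ n, ((f n : ℕ) : ℕ∞) ↔ ∃ n, c ≤ f n := by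
  constructor
  · intro h
    by_contra hcon
    push_neg at hcon
    rcases Nat.eq_zero_or_pos c with hc | hc
    · exact absurd (hc ▸ Nat.zero_le (f 0)) (by have := hcon 0; omega)
    · have hb : ∀ n, ((f n : ℕ) : ℕ∞) ≤ ((c - 1 : ℕ) : ℕ∞) := by
        intro n
        exact_mod_cast Nat.le_sub_one_of_lt (hcon n)
      have h2 : (⨆ n, ((f n : ℕ) : ℕ∞)) ≤ ((c - 1 : ℕ) : ℕ∞) := iSup_le hb
      have h3 : (c : ℕ∞) ≤ ((c - 1 : ℕ) : ℕ∞) := le_trans h h2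
      have h4 : c ≤ c - 1 := by exact_mod_cast h3
      omega
  · intro ⟨n, hn⟩
    exact le_trans (by exact_mod_cast hn) (le_iSup (fun n => ((f n : ℕ) : ℕ∞)) n)

namespace BSetup

variable (B : BSetup Λ)

lemma coe_le_deg {c : ℕ} {i : Fin k} : (c : ℕ∞) ≤ B.deg i ↔ ∃ n, c ≤ B.pdeg n i :=
  coe_le_iSup_iff

lemma exists_bound (q : Fin k → ℕ) (hq : ∀ i, (q i : ℕ∞) ≤ B.deg i) :
    ∃ n, ∀ i, q i ≤ B.pdeg n i := by
  have h1 : ∀ i, ∃ n, q i ≤ B.pdeg n i := fun i => B.coe_le_deg.mp (hq i)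
  choose ns hns using h1
  exact ⟨Finset.univ.sup ns, fun i =>
    le_trans (hns i) (B.pdeg_mono (Finset.le_sup (Finset.mem_univ i)) i)⟩

/-- The map of the boundary path. -/
noncomputable def bmap (p q : Fin k → ℕ) (hpq : ∀ i, p i ≤ q i)
    (hq : ∀ i, (q i : ℕ∞) ≤ B.deg i) : Λ.Path :=
  Λ.seg (B.PC (B.exists_bound q hq).choose).1 p q hpq
    (fun i => (B.exists_bound q hq).choose_spec i)

/-- The vertices of the boundary path. -/
noncomputable def bvert (p : Fin k → ℕ) (hp : ∀ i, (p i : ℕ∞) ≤ B.deg i) : Λ.Obj :=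
  Λ.vtx (B.PC (B.exists_bound p hp).choose).1 p
    (fun i => (B.exists_bound p hp).choose_spec i)

lemma bmap_eq {p q : Fin k → ℕ} {hpq : ∀ i, p i ≤ q i} {hq : ∀ i, (q i : ℕ∞) ≤ B.deg i}
    {n : ℕ} (hq' : ∀ i, q i ≤ B.pdeg n i) :
    B.bmap p q hpq hq = Λ.seg (B.PC n).1 p q hpq hq' := by
  unfold bmap
  rcases le_total (B.exists_bound q hq).choose n with h | h
  · exact (B.seg_PC_le h hpq _ hq').symm
  · exact B.seg_PC_le h hpq hq' _
lemma bvert_eq {p : Fin k → ℕ} {hp : ∀ i, (p i : ℕ∞) ≤ B.deg i}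
    {n : ℕ} (hp' : ∀ i, p i ≤ B.pdeg n i) :
    B.bvert p hp = Λ.vtx (B.PC n).1 p hp' := by
  unfold bvert
  rcases le_total (B.exists_bound p hp).choose n with h | h
  · exact (B.vtx_PC_le h _ hp').symm
  · exact B.vtx_PC_le h hp' _

end BSetup

end KGraph
namespace KGraph

variable {k : ℕ} {Λ : KGraph k}

namespace BSetup

variable (B : BSetup Λ)

lemma d_bmap (p q : Fin k → ℕ) (hpq : ∀ i, p i ≤ q i) (hq : ∀ i, (q i : ℕ∞) ≤ B.deg i) :
    Λ.d (B.bmap p q hpq hq) = fun i => q i - p i := d_seg _ _ _ _ _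

lemma rng_bmap (p q : Fin k → ℕ) (hpq : ∀ i, p i ≤ q i) (hq : ∀ i, (q i : ℕ∞) ≤ B.deg i)
    (hp : ∀ i, (p i : ℕ∞) ≤ B.deg i) :
    Λ.rng (B.bmap p q hpq hq) = B.bvert p hp := by
  obtain ⟨n, hn⟩ := B.exists_bound q hq
  have hpn : ∀ i, p i ≤ B.pdeg n i := fun i => le_trans (hpq i) (hn i)
  rw [B.bmap_eq hn, rng_seg (B.PC n).1 p q hpq hn, B.bvert_eq hpn]

lemma src_bmap (p q : Fin k → ℕ) (hpq : ∀ i, p i ≤ q i) (hq : ∀ i, (q i : ℕ∞) ≤ B.deg i) :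
    Λ.src (B.bmap p q hpq hq) = B.bvert q hq := by
  obtain ⟨n, hn⟩ := B.exists_bound q hq
  rw [B.bmap_eq hn, src_seg (B.PC n).1 p q hpq hn, B.bvert_eq hn]

lemma bmap_self (p : Fin k → ℕ) (hp : ∀ i, (p i : ℕ∞) ≤ B.deg i) :
    B.bmap p p (fun i => le_refl _) hp = Λ.ident (B.bvert p hp) := by
  obtain ⟨n, hn⟩ := B.exists_bound p hp
  rw [B.bmap_eq hn, seg_self (B.PC n).1 p hn, B.bvert_eq hn]

lemma bmap_comp (p q r : Fin k → ℕ) (hpq : ∀ i, p i ≤ q i) (hqr : ∀ i, q i ≤ r i)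
    (hq : ∀ i, (q i : ℕ∞) ≤ B.deg i) (hr : ∀ i, (r i : ℕ∞) ≤ B.deg i)
    (hcomp : Λ.src (B.bmap p q hpq hq) = Λ.rng (B.bmap q r hqr hr)) :
    Λ.comp (B.bmap p q hpq hq) (B.bmap q r hqr hr) hcomp
      = B.bmap p r (fun i => le_trans (hpq i) (hqr i)) hr := by
  obtain ⟨n, hn⟩ := B.exists_bound r hr
  have hqn : ∀ i, q i ≤ B.pdeg n i := fun i => le_trans (hqr i) (hn i)
  have e1 := B.bmap_eq (hpq := hpq) (hq := hq) hqn
  have e2 := B.bmap_eq (hpq := hqr) (hq := hr) hn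
  have e3 := B.bmap_eq (hpq := fun i => le_trans (hpq i) (hqr i)) (hq := hr) hn
  have hcomp' : Λ.src (Λ.seg (B.PC n).1 p q hpq hqn)
      = Λ.rng (Λ.seg (B.PC n).1 q r hqr hn) := by rw [← e1, ← e2]; exact hcomp
  calc Λ.comp (B.bmap p q hpq hq) (B.bmap q r hqr hr) hcomp
      = Λ.comp (Λ.seg (B.PC n).1 p q hpq hqn) (Λ.seg (B.PC n).1 q r hqr hn) hcomp' :=
        comp_congr e1 e2 _ _
    _ = Λ.seg (B.PC n).1 p r (fun i => le_trans (hpq i) (hqr i)) hn :=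
        seg_comp _ _ _ _ hpq hqr hn hqn hcomp'
    _ = B.bmap p r (fun i => le_trans (hpq i) (hqr i)) hr := e3.symm

lemma boundary_cond (p : Fin k → ℕ) (hp : ∀ i, (p i : ℕ∞) ≤ B.deg i) (i : Fin k)
    (hni : ¬((p i : ℕ∞) + 1 ≤ B.deg i)) :
    ¬∃ l : Λ.Path, Λ.rng l = B.bvert p hp ∧ Λ.d l = Pi.single i 1 := by
  rintro ⟨f, hf1, hf2⟩
  have hub : ∀ n, B.pdeg n i ≤ p i := by
    intro n
    by_contra hcon
    apply hni
    have h1 : ((p i + 1 : ℕ) : ℕ∞) ≤ B.deg i := B.coe_le_deg.mpr ⟨n, by omega⟩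
    calc (p i : ℕ∞) + 1 = ((p i + 1 : ℕ) : ℕ∞) := by push_cast; ring
      _ ≤ B.deg i := h1
  have hai : B.a i = 0 := by
    by_contra ha
    have h1 := B.pdeg_growth (p i + 1) i ha
    have h2 := hub (2 * (p i + 1))
    omega
  obtain ⟨n0, hn0⟩ := B.exists_bound p hp
  have hemits : ∀ n, n0 ≤ n →
      ∃ g, Λ.rng g = Λ.src (B.PC n).1 ∧ Λ.d g = Pi.single i 1 := by
    intro n hn
    have hpn : ∀ i', p i' ≤ B.pdeg n i' := fun i' => le_trans (hn0 i') (B.pdeg_mono hn i')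
    have hqle : ∀ i', B.pdeg n i' ≤ Λ.d (B.PC n).1 i' := fun i' => le_of_eq rfl
    set ξ := Λ.seg (B.PC n).1 p (B.pdeg n) hpn hqle with hξ
    have hdξi : Λ.d ξ i = 0 := by
      rw [hξ, d_seg]
      have := hub n
      have := hpn i
      simp only
      omega
    have hrngξ : Λ.rng ξ = B.bvert p hp := by
      rw [hξ, rng_seg, B.bvert_eq hpn]
    have hsrcξ : Λ.src ξ = Λ.src (B.PC n).1 := by
      rw [hξ, src_seg]
      exact vtx_full (B.PC n).1 hqle
    obtain ⟨g, hg1, hg2⟩ := emits_down B.hlc (∑ j, Λ.d ξ j) ξ rfl i hdξi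
      ⟨f, by rw [hf1, hrngξ], hf2⟩
    exact ⟨g, by rw [hg1, hsrcξ], hg2⟩
  -- pick a round j ≥ n0 scheduled for direction i
  set j := i.val + k * (n0 + 1) with hj
  have hjmod : j % k = i.val := by
    rw [hj, Nat.add_mul_mod_self_left, Nat.mod_eq_of_lt i.isLt]
  have hdirj : B.dir j = i := by
    unfold dir
    exact Fin.ext hjmod
  have hkn0 : n0 + 1 ≤ k * (n0 + 1) := by
    have := Nat.mul_le_mul_right (n0 + 1) B.hk
    omega
  have hn02j : n0 ≤ 2 * j := by omega
  -- the state at round j emits e_i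
  obtain ⟨g, hg1, hg2⟩ := hemits (2 * j) hn02j
  have hsrcPC : Λ.src (B.PC (2 * j)).1 = Λ.src (B.states j).L := by
    rw [(B.PC (2 * j)).2, B.seq_even, (B.states j).hloop]
  have hstep := (B.chain_spec j).2.2.2
  rw [hdirj] at hstep
  have hconn : Λ.d (B.conn j) = Pi.single i 1 :=
    hstep ⟨hai, g, by rw [hg1, hsrcPC], hg2⟩
  -- contradiction with hub
  have h1 := congrFun (B.pdeg_succ (2 * j + 1)) i
  have h2 : B.seq (2 * j + 1) = B.conn j := B.seq_odd j
  have h3 : B.pdeg (2 * j + 1) i ≥ p i := by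
    have := B.pdeg_mono (show n0 ≤ 2 * j + 1 by omega) i
    have := hn0 i
    omega
  have h4 := hub (2 * j + 1 + 1)
  rw [Pi.add_apply, h2, hconn, Pi.single_eq_same] at h1
  omega

/-- The boundary path constructed from the setup. -/
noncomputable def toBP : Λ.BoundaryPath where
  deg := B.deg
  vert := B.bvert
  map := B.bmap
  rng_map := fun p q hpq hq => B.rng_bmap p q hpq hq _
  src_map := fun p q hpq hq => B.src_bmap p q hpq hq
  d_map := fun p q hpq hq => B.d_bmap p q hpq hq
  map_self := fun p hp => B.bmap_self p hp
  map_comp := fun p q r hpq hqr hq hr hcomp => B.bmap_comp p q r hpq hqr hq hr hcomp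
  boundary := fun p hp i hni => B.boundary_cond p hp i hni

lemma returns (m : Fin k → ℕ) (hm : ∀ i, (m i : ℕ∞) ≤ B.deg i) :
    ∃ (n p : Fin k → ℕ) (hnp : ∀ i, ((n i + p i : ℕ) : ℕ∞) ≤ B.deg i),
      (∀ i, m i ≤ n i) ∧
      Λ.IsReturnPath (B.bmap n (fun i => n i + p i) (fun i => Nat.le_add_right _ _) hnp) ∧
      Λ.HasEntrance (B.bmap n (fun i => n i + p i) (fun i => Nat.le_add_right _ _) hnp) := by
  obtain ⟨n1, hn1⟩ := B.exists_bound m hm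
  set j1 := n1 + Finset.univ.sup m with hj1
  have hmle : ∀ i, m i ≤ B.pdeg (2 * j1) i := by
    intro i
    by_cases ha : B.a i = 0
    · have h1 := B.pdeg_mono (show n1 ≤ 2 * j1 by omega) i
      have := hn1 i
      omega
    · have h1 := B.pdeg_growth j1 i ha
      have h2 : m i ≤ Finset.univ.sup m := Finset.le_sup (Finset.mem_univ i)
      omega
  set n := B.pdeg (2 * j1) with hn
  set p := Λ.d (B.states j1).L with hpd
  have hsum : ∀ i, n i + p i = B.pdeg (2 * j1 + 1) i := by
    intro i
    have h1 := congrFun (B.pdeg_succ (2 * j1)) i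
    rw [Pi.add_apply, B.seq_even] at h1
    rw [h1, hn, hpd]
  have hnp : ∀ i, ((n i + p i : ℕ) : ℕ∞) ≤ B.deg i := by
    intro i
    exact B.coe_le_deg.mpr ⟨2 * j1 + 1, by rw [hsum i]⟩
  have hble : ∀ i, n i + p i ≤ B.pdeg (2 * j1 + 1) i := fun i => le_of_eq (hsum i)
  have hkey : B.bmap n (fun i => n i + p i) (fun i => Nat.le_add_right _ _) hnp
      = (B.states j1).L := by
    rw [B.bmap_eq hble]
    have hc : Λ.src (B.PC (2 * j1)).1 = Λ.rng (B.states j1).L := by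
      rw [(B.PC (2 * j1)).2, B.seq_even]
    have hl : Λ.comp (B.PC (2 * j1)).1 (B.states j1).L hc = (B.PC (2 * j1 + 1)).1 := by
      rw [B.PC_succ]
      exact comp_congr rfl (B.seq_even j1).symm _ _
    refine seg_eq_two hc hl rfl ?_ _ _
    funext i
    rw [hpd]
    show Λ.d (B.states j1).L i = (n i + Λ.d (B.states j1).L i) - n i
    omega
  refine ⟨n, p, hnp, fun i => hmle i, ?_, ?_⟩
  · rw [hkey]; exact (B.states j1).hloop
  · rw [hkey]; exact (B.states j1).hent

end BSetup

end KGraph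
/-- Corollary 5.3: a row-finite, locally convex `k`-graph containing a return path with
an entrance admits a boundary path `x ∈ Λ^{≤∞}` such that for every `m ≤ d(x)` there are
`n ≥ m` and `p` with `n + p ≤ d(x)` such that `x(n, n + p)` is a return path with an
entrance. -/
theorem exists_boundary_path_with_return_paths
    {k : ℕ} (hk : 1 ≤ k) (Λ : KGraph k)
    (hrf : Λ.RowFinite) (hlc : Λ.LocallyConvex)
    (hex : ∃ α : Λ.Path, Λ.IsReturnPath α ∧ Λ.HasEntrance α) :
    ∃ x : Λ.BoundaryPath, ∀ (m : Fin k → ℕ), (∀ i, (m i : ℕ∞) ≤ x.deg i) →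
      ∃ (n p : Fin k → ℕ) (hnp : ∀ i, ((n i + p i : ℕ) : ℕ∞) ≤ x.deg i),
        (∀ i, m i ≤ n i) ∧
        Λ.IsReturnPath (x.map n (fun i => n i + p i) (fun i => Nat.le_add_right _ _) hnp) ∧
        Λ.HasEntrance (x.map n (fun i => n i + p i) (fun i => Nat.le_add_right _ _) hnp) := by
  obtain ⟨α, hαret, hαent⟩ := hex
  have B : KGraph.BSetup Λ :=
    ⟨hk, Λ.d α, hrf, hlc, ⟨α, hαret, hαent, ⟨1, le_refl 1, (one_smul ℕ (Λ.d α)).symm⟩⟩⟩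
  exact ⟨B.toBP, fun m hm => B.returns m hm⟩
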